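/- arXiv:1912.06734 — 2 statements merged into one kernel-verified Lean document; each statement's English description precedes it below -/
import Mathlib

section
/- Optimal feedback law for the QDP (Lemma 3.4(ii)): Assume SOSC. Then the QDP has a unique global minimizer (p*, q*), and for every k = 0,…,N−1: q*_k = P_k p*_k + W_k⁻¹B_kᵀ Σ_{i=k+1}^{N−1} (M_i^{k+1})ᵀ l_i + W_k⁻¹B_kᵀ Σ_{i=k+1}^{N−1} (V_i^{k+1})ᵀ C_i l_i − W_k⁻¹B_kᵀK_{k+1}C_k l_k − W_k⁻¹D_{k2}ᵀ l_k. -/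
open Matrix BigOperators Finset

section Helpers
variable {n m : ℕ}

lemma dp_flip (x : Fin n → ℝ) (M : Matrix (Fin n) (Fin m) ℝ) (y : Fin m → ℝ) :
    x ⬝ᵥ M *ᵥ y = y ⬝ᵥ Mᵀ *ᵥ x := by
  rw [dotProduct_mulVec, dotProduct_comm, ← mulVec_transpose]

lemma mv_dp (x : Fin n → ℝ) (M : Matrix (Fin m) (Fin n) ℝ) (y : Fin m → ℝ) :
    (M *ᵥ x) ⬝ᵥ y = x ⬝ᵥ Mᵀ *ᵥ y := by
  rw [dotProduct_comm, dp_flip]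

lemma inv_symm (Wm : Matrix (Fin n) (Fin n) ℝ) (hWs : Wmᵀ = Wm) : (Wm⁻¹)ᵀ = Wm⁻¹ := by
  rw [Matrix.transpose_nonsing_inv, hWs]

lemma pd_inv (Wm : Matrix (Fin m) (Fin m) ℝ)
    (hpd : ∀ u, u ≠ 0 → 0 < u ⬝ᵥ Wm *ᵥ u) : Wm * Wm⁻¹ = 1 := by
  apply Matrix.mul_nonsing_inv
  rw [isUnit_iff_ne_zero]
  intro hdet
  obtain ⟨v, hv, hveq⟩ := (Matrix.exists_mulVec_eq_zero_iff).mpr hdet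
  have := hpd v hv
  rw [hveq, dotProduct_zero] at this
  exact lt_irrefl _ this

lemma pd_nonneg (Wm : Matrix (Fin m) (Fin m) ℝ)
    (hpd : ∀ u, u ≠ 0 → 0 < u ⬝ᵥ Wm *ᵥ u) (r : Fin m → ℝ) : 0 ≤ r ⬝ᵥ Wm *ᵥ r := by
  by_cases hr : r = 0
  · simp [hr]
  · exact le_of_lt (hpd r hr)

lemma complete_square (Wm : Matrix (Fin n) (Fin n) ℝ) (hWs : Wmᵀ = Wm)
    (hW1 : Wm * Wm⁻¹ = 1) (u z : Fin n → ℝ) :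
    u ⬝ᵥ Wm *ᵥ u + 2*(u ⬝ᵥ z)
      = (u + Wm⁻¹ *ᵥ z) ⬝ᵥ Wm *ᵥ (u + Wm⁻¹ *ᵥ z) - z ⬝ᵥ Wm⁻¹ *ᵥ z := by
  have hWinvs : (Wm⁻¹)ᵀ = Wm⁻¹ := inv_symm Wm hWs
  have h1 : (Wm⁻¹ *ᵥ z) ⬝ᵥ Wm *ᵥ u = u ⬝ᵥ z := by
    rw [dp_flip, hWs, mulVec_mulVec, hW1, one_mulVec]
  have h2 : u ⬝ᵥ Wm *ᵥ (Wm⁻¹ *ᵥ z) = u ⬝ᵥ z := by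
    rw [mulVec_mulVec, hW1, one_mulVec]
  have h3 : (Wm⁻¹ *ᵥ z) ⬝ᵥ Wm *ᵥ (Wm⁻¹ *ᵥ z) = z ⬝ᵥ Wm⁻¹ *ᵥ z := by
    rw [mulVec_mulVec, hW1, one_mulVec, dotProduct_comm]
  simp only [mulVec_add, dotProduct_add, add_dotProduct, h1, h2, h3]; ring

lemma stepA
    (Am Qm K' : Matrix (Fin n) (Fin n) ℝ) (Bm : Matrix (Fin n) (Fin m) ℝ)
    (Rm Wm : Matrix (Fin m) (Fin m) ℝ) (Sm : Matrix (Fin m) (Fin n) ℝ)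
    (hKs : K'ᵀ = K')
    (hWdef : Wm = Rm + Bmᵀ*K'*Bm)
    (x cl g' d1 : Fin n → ℝ) (u d2 : Fin m → ℝ) (c' : ℝ) :
    x ⬝ᵥ Qm *ᵥ x + 2*(u ⬝ᵥ Sm *ᵥ x) + u ⬝ᵥ Rm *ᵥ u + 2*(d1 ⬝ᵥ x) + 2*(d2 ⬝ᵥ u)
      + ((Am *ᵥ x + Bm *ᵥ u + cl) ⬝ᵥ K' *ᵥ (Am *ᵥ x + Bm *ᵥ u + cl)
         + 2*(g' ⬝ᵥ (Am *ᵥ x + Bm *ᵥ u + cl)) + c')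
    = u ⬝ᵥ Wm *ᵥ u
      + 2*(u ⬝ᵥ ((Bmᵀ*K'*Am + Sm) *ᵥ x + (d2 + Bmᵀ *ᵥ (K' *ᵥ cl) + Bmᵀ *ᵥ g')))
      + (x ⬝ᵥ (Qm + Amᵀ*K'*Am) *ᵥ x
         + 2*((d1 + Amᵀ *ᵥ (K' *ᵥ cl) + Amᵀ *ᵥ g') ⬝ᵥ x)
         + (cl ⬝ᵥ K' *ᵥ cl + 2*(g' ⬝ᵥ cl) + c')) := by
  subst hWdef
  simp only [mulVec_add, add_mulVec, dotProduct_add, add_dotProduct, mulVec_mulVec,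
    mv_dp, Matrix.transpose_mul, Matrix.transpose_transpose, hKs]
  have e1 : x ⬝ᵥ (Amᵀ * (K' * Bm)) *ᵥ u = u ⬝ᵥ (Bmᵀ * (K' * Am)) *ᵥ x := by
    rw [dp_flip]; simp [Matrix.transpose_mul, Matrix.transpose_transpose, hKs, Matrix.mul_assoc]
  have e2 : cl ⬝ᵥ (K' * Bm) *ᵥ u = u ⬝ᵥ (Bmᵀ * K') *ᵥ cl := by
    rw [dp_flip]; simp [Matrix.transpose_mul, Matrix.transpose_transpose, hKs]
  have e3 : cl ⬝ᵥ (K' * Am) *ᵥ x = x ⬝ᵥ (Amᵀ * K') *ᵥ cl := by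
    rw [dp_flip]; simp [Matrix.transpose_mul, Matrix.transpose_transpose, hKs]
  have e4 : g' ⬝ᵥ Bm *ᵥ u = u ⬝ᵥ Bmᵀ *ᵥ g' := dp_flip _ _ _
  have e5 : g' ⬝ᵥ Am *ᵥ x = x ⬝ᵥ Amᵀ *ᵥ g' := dp_flip _ _ _
  have e6 : d2 ⬝ᵥ u = u ⬝ᵥ d2 := dotProduct_comm _ _
  have e7 : d1 ⬝ᵥ x = x ⬝ᵥ d1 := dotProduct_comm _ _
  simp only [e1,e2,e3,e4,e5,e6,e7, Matrix.mul_assoc]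
  ring

lemma stepC (G : Matrix (Fin m) (Fin n) ℝ) (Wi : Matrix (Fin m) (Fin m) ℝ) (hWis : Wiᵀ = Wi)
    (M0 : Matrix (Fin n) (Fin n) ℝ) (v0 x : Fin n → ℝ) (h : Fin m → ℝ) (c0 : ℝ) :
    -((G *ᵥ x + h) ⬝ᵥ Wi *ᵥ (G *ᵥ x + h)) + (x ⬝ᵥ M0 *ᵥ x + 2*(v0 ⬝ᵥ x) + c0)
    = x ⬝ᵥ (M0 - Gᵀ*Wi*G) *ᵥ x + 2*((v0 + (-(Wi*G))ᵀ *ᵥ h) ⬝ᵥ x) + (c0 - h ⬝ᵥ Wi *ᵥ h) := by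
  have e1 : (G *ᵥ x) ⬝ᵥ Wi *ᵥ h = x ⬝ᵥ (Gᵀ*Wi) *ᵥ h := by
    rw [mv_dp, mulVec_mulVec]
  have e2 : h ⬝ᵥ Wi *ᵥ (G *ᵥ x) = x ⬝ᵥ (Gᵀ*Wi) *ᵥ h := by
    rw [dp_flip, hWis, ← mulVec_mulVec, mv_dp, mulVec_mulVec]
  have e3 : (G *ᵥ x) ⬝ᵥ Wi *ᵥ (G *ᵥ x) = x ⬝ᵥ (Gᵀ*(Wi*G)) *ᵥ x := by
    rw [mv_dp, mulVec_mulVec, mulVec_mulVec, Matrix.mul_assoc]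
  have e4 : ((-(Wi*G))ᵀ *ᵥ h) ⬝ᵥ x = -(x ⬝ᵥ (Gᵀ*Wi) *ᵥ h) := by
    rw [mv_dp, Matrix.transpose_transpose, neg_mulVec, dotProduct_neg, ← mulVec_mulVec, e2]
  have e5 : v0 ⬝ᵥ x = x ⬝ᵥ v0 := dotProduct_comm _ _
  simp only [mulVec_add, dotProduct_add, add_dotProduct, sub_mulVec, dotProduct_sub,
    e1, e2, e3, e4, e5, Matrix.mul_assoc]
  ring

lemma step_identity
    (Am Qm K' Kk : Matrix (Fin n) (Fin n) ℝ) (Bm : Matrix (Fin n) (Fin m) ℝ)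
    (Rm Wm : Matrix (Fin m) (Fin m) ℝ) (Sm Pm : Matrix (Fin m) (Fin n) ℝ)
    (hKs : K'ᵀ = K') (hRs : Rmᵀ = Rm)
    (hWdef : Wm = Rm + Bmᵀ*K'*Bm)
    (hPdef : Pm = -(Wm⁻¹*(Bmᵀ*K'*Am + Sm)))
    (hKdef : Kk = Qm + Amᵀ*K'*Am - (Bmᵀ*K'*Am + Sm)ᵀ*Wm⁻¹*(Bmᵀ*K'*Am + Sm))
    (hW1 : Wm * Wm⁻¹ = 1)
    (x cl g' d1 : Fin n → ℝ) (u d2 : Fin m → ℝ) (c' : ℝ) :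
    x ⬝ᵥ Qm *ᵥ x + 2*(u ⬝ᵥ Sm *ᵥ x) + u ⬝ᵥ Rm *ᵥ u + 2*(d1 ⬝ᵥ x) + 2*(d2 ⬝ᵥ u)
      + ((Am *ᵥ x + Bm *ᵥ u + cl) ⬝ᵥ K' *ᵥ (Am *ᵥ x + Bm *ᵥ u + cl)
         + 2*(g' ⬝ᵥ (Am *ᵥ x + Bm *ᵥ u + cl)) + c')
    = (u - (Pm *ᵥ x - Wm⁻¹ *ᵥ (d2 + Bmᵀ *ᵥ (K' *ᵥ cl) + Bmᵀ *ᵥ g'))) ⬝ᵥ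
        Wm *ᵥ (u - (Pm *ᵥ x - Wm⁻¹ *ᵥ (d2 + Bmᵀ *ᵥ (K' *ᵥ cl) + Bmᵀ *ᵥ g')))
      + (x ⬝ᵥ Kk *ᵥ x
         + 2*((d1 + Amᵀ *ᵥ (K' *ᵥ cl) + Amᵀ *ᵥ g' + Pmᵀ *ᵥ (d2 + Bmᵀ *ᵥ (K' *ᵥ cl) + Bmᵀ *ᵥ g')) ⬝ᵥ x)
         + (c' + cl ⬝ᵥ K' *ᵥ cl + 2*(g' ⬝ᵥ cl)
            - (d2 + Bmᵀ *ᵥ (K' *ᵥ cl) + Bmᵀ *ᵥ g') ⬝ᵥ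
                Wm⁻¹ *ᵥ (d2 + Bmᵀ *ᵥ (K' *ᵥ cl) + Bmᵀ *ᵥ g'))) := by
  have hWs : Wmᵀ = Wm := by
    rw [hWdef]; simp [Matrix.transpose_add, Matrix.transpose_mul, hKs, hRs, Matrix.mul_assoc]
  have hWis : (Wm⁻¹)ᵀ = Wm⁻¹ := inv_symm Wm hWs
  set h := d2 + Bmᵀ *ᵥ (K' *ᵥ cl) + Bmᵀ *ᵥ g' with hh
  set G := Bmᵀ*K'*Am + Sm with hG
  set z := G *ᵥ x + h with hz
  have hres : u - (Pm *ᵥ x - Wm⁻¹ *ᵥ h) = u + Wm⁻¹ *ᵥ z := by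
    rw [hz, hh, hPdef, hG]
    simp only [neg_mulVec, mulVec_add, mulVec_mulVec]
    abel
  rw [stepA Am Qm K' Bm Rm Wm Sm hKs hWdef x cl g' d1 u d2 c', hres,
    complete_square Wm hWs hW1 u z]
  have := stepC G Wm⁻¹ hWis (Qm + Amᵀ*K'*Am)
      (d1 + Amᵀ *ᵥ (K' *ᵥ cl) + Amᵀ *ᵥ g') x h (cl ⬝ᵥ K' *ᵥ cl + 2*(g' ⬝ᵥ cl) + c')
  rw [hz]
  have hKk : Kk = Qm + Amᵀ*K'*Am - Gᵀ*Wm⁻¹*G := by rw [hKdef, hG]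
  have hPm : Pmᵀ = (-(Wm⁻¹*G))ᵀ := by rw [hPdef, hG]
  rw [hKk, hPm]
  linarith [this]

lemma step0
    (Am Qm K' Kk : Matrix (Fin n) (Fin n) ℝ) (Bm : Matrix (Fin n) (Fin m) ℝ)
    (Rm Wm : Matrix (Fin m) (Fin m) ℝ) (Sm Pm : Matrix (Fin m) (Fin n) ℝ)
    (hKs : K'ᵀ = K') (hRs : Rmᵀ = Rm)
    (hWdef : Wm = Rm + Bmᵀ*K'*Bm)
    (hPdef : Pm = -(Wm⁻¹*(Bmᵀ*K'*Am + Sm)))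
    (hKdef : Kk = Qm + Amᵀ*K'*Am - (Bmᵀ*K'*Am + Sm)ᵀ*Wm⁻¹*(Bmᵀ*K'*Am + Sm))
    (hW1 : Wm * Wm⁻¹ = 1)
    (x : Fin n → ℝ) :
    x ⬝ᵥ Qm *ᵥ x + 2*((Pm *ᵥ x) ⬝ᵥ Sm *ᵥ x) + (Pm *ᵥ x) ⬝ᵥ Rm *ᵥ (Pm *ᵥ x)
      + (Am *ᵥ x + Bm *ᵥ (Pm *ᵥ x)) ⬝ᵥ K' *ᵥ (Am *ᵥ x + Bm *ᵥ (Pm *ᵥ x))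
    = x ⬝ᵥ Kk *ᵥ x := by
  have := step_identity Am Qm K' Kk Bm Rm Wm Sm Pm hKs hRs hWdef hPdef hKdef hW1
    x 0 0 0 (Pm *ᵥ x) 0 0
  simp only [mulVec_zero, dotProduct_zero, zero_dotProduct, add_zero, sub_zero, zero_add,
    mul_zero, sub_self] at this
  convert this using 2 <;> simp

lemma sum_Ico_tele (f : ℕ → ℝ) (a : ℕ) : ∀ b, a ≤ b →
    ∑ j ∈ Ico a b, (f j - f (j+1)) = f a - f b := by
  intro b
  induction b with
  | zero => intro h; interval_cases a; simp
  | succ b ih =>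
    intro h
    rcases Nat.lt_or_ge a (b+1) with h' | h'
    · have hab : a ≤ b := Nat.lt_succ_iff.mp h'
      rw [Finset.sum_Ico_succ_top hab, ih hab]; ring
    · have : a = b + 1 := le_antisymm h h'
      subst this; simp

end Helpers


/-- Ordered product of matrices: `prodE E i len = E (i+len-1) * ⋯ * E (i+1) * E i`,
with the empty product equal to the identity. -/
def prodE {n : ℕ} (E : ℕ → Matrix (Fin n) (Fin n) ℝ) : ℕ → ℕ → Matrix (Fin n) (Fin n) ℝ
  | _, 0 => 1
  | i, (len + 1) => E (i + len) * prodE E i len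

lemma prodE_bot {n : ℕ} (E : ℕ → Matrix (Fin n) (Fin n) ℝ) (k : ℕ) :
    ∀ len, prodE E k (len + 1) = prodE E (k+1) len * E k := by
  intro len
  induction len with
  | zero => simp [prodE]
  | succ d ih =>
    show E (k + (d+1)) * prodE E k (d+1) = prodE E (k+1) (d+1) * E k
    rw [ih]
    show E (k + (d+1)) * (prodE E (k+1) d * E k) = E (k + 1 + d) * prodE E (k+1) d * E k
    rw [← Matrix.mul_assoc]
    have h : k + (d+1) = k+1+d := by omega
    rw [h]

noncomputable def gA {nx nu nd : ℕ} (N : ℕ)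
    (K E : ℕ → Matrix (Fin nx) (Fin nx) ℝ) (P : ℕ → Matrix (Fin nu) (Fin nx) ℝ)
    (C : ℕ → Matrix (Fin nx) (Fin nd) ℝ)
    (D1 : ℕ → Matrix (Fin nd) (Fin nx) ℝ) (D2 : ℕ → Matrix (Fin nd) (Fin nu) ℝ)
    (l : ℕ → Fin nd → ℝ) (k : ℕ) : Fin nx → ℝ :=
  ∑ i ∈ Ico k N,
    ((prodE E k (i-k))ᵀ *ᵥ ((D1 i + D2 i * P i)ᵀ *ᵥ l i)
      + (prodE E k (i+1-k))ᵀ *ᵥ (K (i+1) *ᵥ (C i *ᵥ l i)))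

lemma gA_N {nx nu nd : ℕ} (N : ℕ) (K E) (P : ℕ → Matrix (Fin nu) (Fin nx) ℝ)
    (C : ℕ → Matrix (Fin nx) (Fin nd) ℝ) (D1 D2) (l : ℕ → Fin nd → ℝ) :
    gA N K E P C D1 D2 l N = 0 := by
  simp [gA]

lemma gA_rec {nx nu nd : ℕ} (N : ℕ) (K E : ℕ → Matrix (Fin nx) (Fin nx) ℝ)
    (P : ℕ → Matrix (Fin nu) (Fin nx) ℝ) (C : ℕ → Matrix (Fin nx) (Fin nd) ℝ)
    (D1 : ℕ → Matrix (Fin nd) (Fin nx) ℝ) (D2 : ℕ → Matrix (Fin nd) (Fin nu) ℝ)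
    (l : ℕ → Fin nd → ℝ) (k : ℕ) (hk : k < N) :
    gA N K E P C D1 D2 l k
      = (D1 k + D2 k * P k)ᵀ *ᵥ l k + (E k)ᵀ *ᵥ (K (k+1) *ᵥ (C k *ᵥ l k))
        + (E k)ᵀ *ᵥ gA N K E P C D1 D2 l (k+1) := by
  unfold gA
  rw [Finset.sum_eq_sum_Ico_succ_bot hk]
  have hterm : ∀ i ∈ Ico (k+1) N,
      (prodE E k (i-k))ᵀ *ᵥ ((D1 i + D2 i * P i)ᵀ *ᵥ l i)
        + (prodE E k (i+1-k))ᵀ *ᵥ (K (i+1) *ᵥ (C i *ᵥ l i))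
      = (E k)ᵀ *ᵥ ((prodE E (k+1) (i-(k+1)))ᵀ *ᵥ ((D1 i + D2 i * P i)ᵀ *ᵥ l i)
          + (prodE E (k+1) (i+1-(k+1)))ᵀ *ᵥ (K (i+1) *ᵥ (C i *ᵥ l i))) := by
    intro i hi
    rw [Finset.mem_Ico] at hi
    have h1 : i - k = (i - (k+1)) + 1 := by omega
    have h2 : i + 1 - k = (i + 1 - (k+1)) + 1 := by omega
    rw [h1, h2, prodE_bot, prodE_bot, Matrix.transpose_mul, Matrix.transpose_mul,
      mulVec_add]
    simp only [← mulVec_mulVec]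
  rw [Finset.sum_congr rfl hterm]
  have hms := (map_sum (Matrix.mulVecLin (E k)ᵀ)
    (fun i => ((prodE E (k+1) (i-(k+1)))ᵀ *ᵥ ((D1 i + D2 i * P i)ᵀ *ᵥ l i)
      + (prodE E (k+1) (i+1-(k+1)))ᵀ *ᵥ (K (i+1) *ᵥ (C i *ᵥ l i)))) (Ico (k+1) N)).symm
  have hms' : ∑ i ∈ Ico (k+1) N, (E k)ᵀ *ᵥ
        ((prodE E (k+1) (i-(k+1)))ᵀ *ᵥ ((D1 i + D2 i * P i)ᵀ *ᵥ l i)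
          + (prodE E (k+1) (i+1-(k+1)))ᵀ *ᵥ (K (i+1) *ᵥ (C i *ᵥ l i)))
      = (E k)ᵀ *ᵥ ∑ i ∈ Ico (k+1) N,
        ((prodE E (k+1) (i-(k+1)))ᵀ *ᵥ ((D1 i + D2 i * P i)ᵀ *ᵥ l i)
          + (prodE E (k+1) (i+1-(k+1)))ᵀ *ᵥ (K (i+1) *ᵥ (C i *ᵥ l i))) := hms
  rw [hms']
  congr 1
  simp [prodE, Matrix.transpose_mul]

/-- `V_i^k = -K_{i+1} (E_i E_{i-1} ⋯ E_k)`. -/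
noncomputable def Vmat {nx : ℕ} (K E : ℕ → Matrix (Fin nx) (Fin nx) ℝ) (i k : ℕ) :
    Matrix (Fin nx) (Fin nx) ℝ :=
  -(K (i + 1) * prodE E k (i + 1 - k))

/-- `M_i^k = -(D_{i1} + D_{i2} P_i) (E_{i-1} E_{i-2} ⋯ E_k)`. -/
noncomputable def Mmat {nx nu nd : ℕ} (D1 : ℕ → Matrix (Fin nd) (Fin nx) ℝ)
    (D2 : ℕ → Matrix (Fin nd) (Fin nu) ℝ) (P : ℕ → Matrix (Fin nu) (Fin nx) ℝ)
    (E : ℕ → Matrix (Fin nx) (Fin nx) ℝ) (i k : ℕ) : Matrix (Fin nd) (Fin nx) ℝ :=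
  -((D1 i + D2 i * P i) * prodE E k (i - k))

/-- Feasibility for the QDP constraints. -/
def Feas {nx nu nd : ℕ} (N : ℕ)
    (A : ℕ → Matrix (Fin nx) (Fin nx) ℝ) (B : ℕ → Matrix (Fin nx) (Fin nu) ℝ)
    (C : ℕ → Matrix (Fin nx) (Fin nd) ℝ) (lm1 : Fin nx → ℝ) (l : ℕ → Fin nd → ℝ)
    (p : ℕ → Fin nx → ℝ) (q : ℕ → Fin nu → ℝ) : Prop :=
  p 0 = lm1 ∧ ∀ k < N, p (k + 1) = A k *ᵥ p k + B k *ᵥ q k + C k *ᵥ l k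

/-- The QDP objective `J(p,q)`. -/
noncomputable def qdpObj {nx nu nd : ℕ} (N : ℕ)
    (Q : ℕ → Matrix (Fin nx) (Fin nx) ℝ) (R : ℕ → Matrix (Fin nu) (Fin nu) ℝ)
    (S : ℕ → Matrix (Fin nu) (Fin nx) ℝ) (D1 : ℕ → Matrix (Fin nd) (Fin nx) ℝ)
    (D2 : ℕ → Matrix (Fin nd) (Fin nu) ℝ) (l : ℕ → Fin nd → ℝ)
    (p : ℕ → Fin nx → ℝ) (q : ℕ → Fin nu → ℝ) : ℝ :=
  (∑ k ∈ range N,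
      (p k ⬝ᵥ Q k *ᵥ p k + 2 * (q k ⬝ᵥ S k *ᵥ p k) + q k ⬝ᵥ R k *ᵥ q k
        + 2 * (l k ⬝ᵥ D1 k *ᵥ p k) + 2 * (l k ⬝ᵥ D2 k *ᵥ q k)))
    + p N ⬝ᵥ Q N *ᵥ p N

/-- SOSC: the homogeneous quadratic objective is positive on every nonzero
feasible homogeneous trajectory. -/
def SOSC {nx nu : ℕ} (N : ℕ)
    (A : ℕ → Matrix (Fin nx) (Fin nx) ℝ) (B : ℕ → Matrix (Fin nx) (Fin nu) ℝ)
    (Q : ℕ → Matrix (Fin nx) (Fin nx) ℝ) (R : ℕ → Matrix (Fin nu) (Fin nu) ℝ)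
    (S : ℕ → Matrix (Fin nu) (Fin nx) ℝ) : Prop :=
  ∀ (p : ℕ → Fin nx → ℝ) (q : ℕ → Fin nu → ℝ),
    p 0 = 0 → (∀ k < N, p (k + 1) = A k *ᵥ p k + B k *ᵥ q k) →
    ¬ ((∀ k ≤ N, p k = 0) ∧ (∀ k < N, q k = 0)) →
    0 < (∑ k ∈ range N,
        (p k ⬝ᵥ Q k *ᵥ p k + 2 * (q k ⬝ᵥ S k *ᵥ p k) + q k ⬝ᵥ R k *ᵥ q k))
      + p N ⬝ᵥ Q N *ᵥ p N

/-- **Optimal feedback law for the QDP (Lemma 3.4(ii)).**  Under SOSC the QDP has a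
unique global minimizer `(p*, q*)`, whose controls are given by the Riccati feedback
formula. -/
theorem qdp_optimal_feedback
    (N nx nu nd : ℕ) (hN : 1 ≤ N) (hnx : 1 ≤ nx) (hnu : 1 ≤ nu) (hnd : 1 ≤ nd)
    (A : ℕ → Matrix (Fin nx) (Fin nx) ℝ) (B : ℕ → Matrix (Fin nx) (Fin nu) ℝ)
    (C : ℕ → Matrix (Fin nx) (Fin nd) ℝ)
    (Q : ℕ → Matrix (Fin nx) (Fin nx) ℝ) (R : ℕ → Matrix (Fin nu) (Fin nu) ℝ)
    (S : ℕ → Matrix (Fin nu) (Fin nx) ℝ)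
    (D1 : ℕ → Matrix (Fin nd) (Fin nx) ℝ) (D2 : ℕ → Matrix (Fin nd) (Fin nu) ℝ)
    (hQsymm : ∀ k ≤ N, (Q k).IsSymm) (hRsymm : ∀ k < N, (R k).IsSymm)
    (lm1 : Fin nx → ℝ) (l : ℕ → Fin nd → ℝ)
    (hsosc : SOSC N A B Q R S)
    (K : ℕ → Matrix (Fin nx) (Fin nx) ℝ) (W : ℕ → Matrix (Fin nu) (Fin nu) ℝ)
    (P : ℕ → Matrix (Fin nu) (Fin nx) ℝ) (E : ℕ → Matrix (Fin nx) (Fin nx) ℝ)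
    (hKN : K N = Q N)
    (hW : ∀ k < N, W k = R k + (B k)ᵀ * K (k + 1) * B k)
    (hP : ∀ k < N, P k = -((W k)⁻¹ * ((B k)ᵀ * K (k + 1) * A k + S k)))
    (hK : ∀ k < N, K k =
      Q k + (A k)ᵀ * K (k + 1) * A k
        - ((B k)ᵀ * K (k + 1) * A k + S k)ᵀ * (W k)⁻¹ * ((B k)ᵀ * K (k + 1) * A k + S k))
    (hE : ∀ k < N, E k = A k + B k * P k) :
    ∃ (p : ℕ → Fin nx → ℝ) (q : ℕ → Fin nu → ℝ),
      Feas N A B C lm1 l p q ∧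
      (∀ p' q', Feas N A B C lm1 l p' q' →
        qdpObj N Q R S D1 D2 l p q ≤ qdpObj N Q R S D1 D2 l p' q') ∧
      (∀ p' q', Feas N A B C lm1 l p' q' →
        qdpObj N Q R S D1 D2 l p' q' ≤ qdpObj N Q R S D1 D2 l p q →
        (∀ k ≤ N, p' k = p k) ∧ (∀ k < N, q' k = q k)) ∧
      (∀ k < N, q k =
        P k *ᵥ p k
          + ((W k)⁻¹ * (B k)ᵀ) *ᵥ (∑ i ∈ Ico (k + 1) N, (Mmat D1 D2 P E i (k + 1))ᵀ *ᵥ l i)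
          + ((W k)⁻¹ * (B k)ᵀ) *ᵥ (∑ i ∈ Ico (k + 1) N, ((Vmat K E i (k + 1))ᵀ * C i) *ᵥ l i)
          - ((W k)⁻¹ * (B k)ᵀ * K (k + 1) * C k) *ᵥ l k
          - ((W k)⁻¹ * (D2 k)ᵀ) *ᵥ l k) := by
  
  classical
  -- K symmetry
  have hKsd : ∀ d j, j + d = N → (K j)ᵀ = K j := by
    intro d
    induction d with
    | zero =>
      intro j hj
      have hjN : j = N := by omega
      rw [hjN, hKN]; exact hQsymm N le_rfl
    | succ d ih =>
      intro j hj
      have hjN : j < N := by omega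
      have hK1 : (K (j+1))ᵀ = K (j+1) := ih (j+1) (by omega)
      have hRs : (R j)ᵀ = R j := hRsymm j hjN
      have hWs : (W j)ᵀ = W j := by
        rw [hW j hjN]
        simp [Matrix.transpose_add, Matrix.transpose_mul, hK1, hRs, Matrix.mul_assoc]
      have hWis := inv_symm (W j) hWs
      have hQs : (Q j)ᵀ = Q j := hQsymm j (le_of_lt hjN)
      rw [hK j hjN]
      simp [Matrix.transpose_sub, Matrix.transpose_add, Matrix.transpose_mul,
        Matrix.transpose_transpose, hK1, hQs, hWis, Matrix.mul_assoc]
  have hKsymm : ∀ j, j ≤ N → (K j)ᵀ = K j := fun j hj => hKsd (N - j) j (by omega)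
  have hstep0 : ∀ j, j < N → (W j) * (W j)⁻¹ = 1 → ∀ x : Fin nx → ℝ,
      x ⬝ᵥ Q j *ᵥ x + 2*((P j *ᵥ x) ⬝ᵥ S j *ᵥ x) + (P j *ᵥ x) ⬝ᵥ R j *ᵥ (P j *ᵥ x)
        + (A j *ᵥ x + B j *ᵥ (P j *ᵥ x)) ⬝ᵥ K (j+1) *ᵥ (A j *ᵥ x + B j *ᵥ (P j *ᵥ x))
      = x ⬝ᵥ K j *ᵥ x :=
    fun j hj hinv x => step0 (A j) (Q j) (K (j+1)) (K j) (B j) (R j) (W j) (S j) (P j)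
      (hKsymm (j+1) hj) (hRsymm j hj) (hW j hj) (hP j hj) (hK j hj) hinv x
  -- W positive definite
  have hWpdd : ∀ d k, k + d = N → ∀ j, k ≤ j → j < N → ∀ u, u ≠ 0 → 0 < u ⬝ᵥ W j *ᵥ u := by
    intro d
    induction d with
    | zero => intro k hk j h1 h2 u hu; omega
    | succ d ih =>
      intro k hk j hkj hjN u hu
      rcases Nat.lt_or_ge k j with hlt | hge
      · exact ih (k+1) (by omega) j hlt hjN u hu
      · have hjk : j = k := le_antisymm (by omega) hkj
        subst hjk
        have hpd' : ∀ j', j+1 ≤ j' → j' < N → ∀ u', u' ≠ 0 → 0 < u' ⬝ᵥ W j' *ᵥ u' :=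
          fun j' h1 h2 => ih (j+1) (by omega) j' h1 h2
        have hinv' : ∀ j', j+1 ≤ j' → j' < N → W j' * (W j')⁻¹ = 1 :=
          fun j' h1 h2 => pd_inv _ (hpd' j' h1 h2)
        set p' : ℕ → Fin nx → ℝ := fun i => Nat.rec 0
          (fun i pi => if i < j then 0 else if i = j then B j *ᵥ u else E i *ᵥ pi) i with hp'
        set q' : ℕ → Fin nu → ℝ := fun i => if i = j then u else P i *ᵥ p' i with hq'
        have hp0 : ∀ i, i ≤ j → p' i = 0 := by
          intro i hi
          induction i with
          | zero => rfl
          | succ i ihp =>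
            have hij : i < j := by omega
            show (if i < j then (0 : Fin nx → ℝ) else if i = j then B j *ᵥ u else E i *ᵥ p' i) = 0
            rw [if_pos hij]
        have hq0 : ∀ i, i < j → q' i = 0 := by
          intro i hi
          show (if i = j then u else P i *ᵥ p' i) = 0
          rw [if_neg (by omega), hp0 i (le_of_lt hi), mulVec_zero]
        have hpj1 : p' (j+1) = B j *ᵥ u := by
          show (if j < j then (0 : Fin nx → ℝ) else if j = j then B j *ᵥ u else E j *ᵥ p' j) = _
          rw [if_neg (lt_irrefl j), if_pos rfl]
        have hdyn : ∀ i, i < N → p' (i+1) = A i *ᵥ p' i + B i *ᵥ q' i := by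
          intro i hiN
          rcases lt_trichotomy i j with hij | hij | hij
          · have h1 : p' (i+1) = 0 := hp0 (i+1) (by omega)
            rw [h1, hp0 i (le_of_lt hij), hq0 i hij, mulVec_zero, mulVec_zero, add_zero]
          · subst hij
            rw [hpj1, hp0 i le_rfl, mulVec_zero, zero_add]
            show B i *ᵥ u = B i *ᵥ (if i = i then u else P i *ᵥ p' i)
            rw [if_pos rfl]
          · have h1 : p' (i+1) = E i *ᵥ p' i := by
              show (if i < j then (0 : Fin nx → ℝ) else if i = j then B j *ᵥ u else E i *ᵥ p' i) = _
              rw [if_neg (by omega), if_neg (by omega)]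
            have h2 : q' i = P i *ᵥ p' i := by
              show (if i = j then u else P i *ᵥ p' i) = _
              rw [if_neg (by omega)]
            rw [h1, h2, hE i hiN, add_mulVec, mulVec_mulVec]
        have hnontriv : ¬ ((∀ i ≤ N, p' i = 0) ∧ (∀ i < N, q' i = 0)) := by
          rintro ⟨-, hqz⟩
          have : q' j = u := by
            show (if j = j then u else P j *ᵥ p' j) = u
            rw [if_pos rfl]
          exact hu (this ▸ hqz j hjN)
        have hJ := hsosc p' q' (hp0 0 (Nat.zero_le j)) hdyn hnontriv
        have hcalc : (∑ i ∈ range N,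
              (p' i ⬝ᵥ Q i *ᵥ p' i + 2 * (q' i ⬝ᵥ S i *ᵥ p' i) + q' i ⬝ᵥ R i *ᵥ q' i))
            + p' N ⬝ᵥ Q N *ᵥ p' N = u ⬝ᵥ W j *ᵥ u := by
          have hj1N : j + 1 ≤ N := hjN
          rw [Finset.range_eq_Ico,
            ← Finset.sum_Ico_consecutive _ (Nat.zero_le (j+1)) hj1N,
            Finset.sum_Ico_succ_top (Nat.zero_le j)]
          have hzero : ∑ i ∈ Ico 0 j,
              (p' i ⬝ᵥ Q i *ᵥ p' i + 2 * (q' i ⬝ᵥ S i *ᵥ p' i) + q' i ⬝ᵥ R i *ᵥ q' i) = 0 := by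
            apply Finset.sum_eq_zero
            intro i hi
            have hij : i < j := (Finset.mem_Ico.mp hi).2
            rw [hp0 i (le_of_lt hij), hq0 i hij]
            simp
          have hstagej : p' j ⬝ᵥ Q j *ᵥ p' j + 2 * (q' j ⬝ᵥ S j *ᵥ p' j) + q' j ⬝ᵥ R j *ᵥ q' j
              = u ⬝ᵥ R j *ᵥ u := by
            have hqj : q' j = u := by
              show (if j = j then u else P j *ᵥ p' j) = u
              rw [if_pos rfl]
            rw [hp0 j le_rfl, hqj]
            simp
          have htail : ∑ i ∈ Ico (j+1) N,
              (p' i ⬝ᵥ Q i *ᵥ p' i + 2 * (q' i ⬝ᵥ S i *ᵥ p' i) + q' i ⬝ᵥ R i *ᵥ q' i)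
              = ∑ i ∈ Ico (j+1) N,
                ((fun i => p' i ⬝ᵥ K i *ᵥ p' i) i - (fun i => p' i ⬝ᵥ K i *ᵥ p' i) (i+1)) := by
            apply Finset.sum_congr rfl
            intro i hi
            obtain ⟨hi1, hi2⟩ := Finset.mem_Ico.mp hi
            have hqi : q' i = P i *ᵥ p' i := by
              show (if i = j then u else P i *ᵥ p' i) = _
              rw [if_neg (by omega)]
            have hpi1 : p' (i+1) = A i *ᵥ p' i + B i *ᵥ (P i *ᵥ p' i) := by
              rw [hdyn i hi2, hqi]
            have := hstep0 i hi2 (hinv' i hi1 hi2) (p' i)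
            simp only
            rw [hqi, hpi1]
            linarith
          rw [hzero, hstagej, htail, sum_Ico_tele _ (j+1) N hj1N]
          have hfN : p' N ⬝ᵥ K N *ᵥ p' N = p' N ⬝ᵥ Q N *ᵥ p' N := by rw [hKN]
          have hfj1 : p' (j+1) ⬝ᵥ K (j+1) *ᵥ p' (j+1) = u ⬝ᵥ ((B j)ᵀ * K (j+1) * B j) *ᵥ u := by
            rw [hpj1, mv_dp, mulVec_mulVec, mulVec_mulVec, Matrix.mul_assoc]
          rw [hfj1, hfN, hW j hjN, add_mulVec, dotProduct_add]
          ring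
        rw [hcalc] at hJ
        exact hJ
  have hWpd : ∀ j, j < N → ∀ u, u ≠ 0 → 0 < u ⬝ᵥ W j *ᵥ u :=
    fun j hj => hWpdd N 0 (by omega) j (Nat.zero_le j) hj
  have hWinv : ∀ j, j < N → W j * (W j)⁻¹ = 1 := fun j hj => pd_inv _ (hWpd j hj)
  -- value function data
  set gv : ℕ → Fin nx → ℝ := gA N K E P C D1 D2 l with hgv
  set hvv : ℕ → Fin nu → ℝ := fun k =>
    (D2 k)ᵀ *ᵥ l k + (B k)ᵀ *ᵥ (K (k+1) *ᵥ (C k *ᵥ l k)) + (B k)ᵀ *ᵥ gv (k+1) with hhvv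
  set cv : ℕ → ℝ := fun k => ∑ i ∈ Ico k N,
    ((C i *ᵥ l i) ⬝ᵥ K (i+1) *ᵥ (C i *ᵥ l i) + 2*(gv (i+1) ⬝ᵥ (C i *ᵥ l i))
      - hvv i ⬝ᵥ (W i)⁻¹ *ᵥ hvv i) with hcv
  set vf : ℕ → (Fin nx → ℝ) → ℝ := fun k x => x ⬝ᵥ K k *ᵥ x + 2*(gv k ⬝ᵥ x) + cv k with hvf
  have hgvrec : ∀ k, k < N → gv k
      = (D1 k + D2 k * P k)ᵀ *ᵥ l k + (E k)ᵀ *ᵥ (K (k+1) *ᵥ (C k *ᵥ l k))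
        + (E k)ᵀ *ᵥ gv (k+1) := fun k hk => gA_rec N K E P C D1 D2 l k hk
  have hcvrec : ∀ k, k < N → cv k
      = ((C k *ᵥ l k) ⬝ᵥ K (k+1) *ᵥ (C k *ᵥ l k) + 2*(gv (k+1) ⬝ᵥ (C k *ᵥ l k))
        - hvv k ⬝ᵥ (W k)⁻¹ *ᵥ hvv k) + cv (k+1) := by
    intro k hk
    rw [hcv]
    exact Finset.sum_eq_sum_Ico_succ_bot hk _
  have vstep : ∀ k, k < N → ∀ x u,
      x ⬝ᵥ Q k *ᵥ x + 2*(u ⬝ᵥ S k *ᵥ x) + u ⬝ᵥ R k *ᵥ u + 2*(l k ⬝ᵥ D1 k *ᵥ x)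
        + 2*(l k ⬝ᵥ D2 k *ᵥ u)
        + vf (k+1) (A k *ᵥ x + B k *ᵥ u + C k *ᵥ l k)
      = (u - (P k *ᵥ x - (W k)⁻¹ *ᵥ hvv k)) ⬝ᵥ W k *ᵥ (u - (P k *ᵥ x - (W k)⁻¹ *ᵥ hvv k))
        + vf k x := by
    intro k hk x u
    have hst := step_identity (A k) (Q k) (K (k+1)) (K k) (B k) (R k) (W k) (S k) (P k)
      (hKsymm (k+1) hk) (hRsymm k hk) (hW k hk) (hP k hk) (hK k hk) (hWinv k hk)
      x (C k *ᵥ l k) (gv (k+1)) ((D1 k)ᵀ *ᵥ l k) u ((D2 k)ᵀ *ᵥ l k) (cv (k+1))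
    have e1 : ((D1 k)ᵀ *ᵥ l k) ⬝ᵥ x = l k ⬝ᵥ D1 k *ᵥ x := by
      rw [mv_dp, Matrix.transpose_transpose]
    have e2 : ((D2 k)ᵀ *ᵥ l k) ⬝ᵥ u = l k ⬝ᵥ D2 k *ᵥ u := by
      rw [mv_dp, Matrix.transpose_transpose]
    have e3 : (D1 k)ᵀ *ᵥ l k + (A k)ᵀ *ᵥ (K (k+1) *ᵥ (C k *ᵥ l k)) + (A k)ᵀ *ᵥ gv (k+1)
        + (P k)ᵀ *ᵥ ((D2 k)ᵀ *ᵥ l k + (B k)ᵀ *ᵥ (K (k+1) *ᵥ (C k *ᵥ l k)) + (B k)ᵀ *ᵥ gv (k+1))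
        = gv k := by
      rw [hgvrec k hk, hE k hk]
      simp only [Matrix.transpose_add, Matrix.transpose_mul, Matrix.add_mul, Matrix.mul_assoc,
        mulVec_add, add_mulVec, mulVec_mulVec]
      abel
    rw [e1, e2, e3] at hst
    have e4 : cv (k+1) + (C k *ᵥ l k) ⬝ᵥ K (k+1) *ᵥ (C k *ᵥ l k) + 2*(gv (k+1) ⬝ᵥ (C k *ᵥ l k))
        - hvv k ⬝ᵥ (W k)⁻¹ *ᵥ hvv k = cv k := by
      rw [hcvrec k hk]; ring
    simp only [hvf, hhvv]
    linarith [hst, e4]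
  -- master identity
  have master : ∀ p q, Feas N A B C lm1 l p q →
      qdpObj N Q R S D1 D2 l p q
        = (∑ k ∈ range N, (q k - (P k *ᵥ p k - (W k)⁻¹ *ᵥ hvv k)) ⬝ᵥ
            W k *ᵥ (q k - (P k *ᵥ p k - (W k)⁻¹ *ᵥ hvv k))) + vf 0 lm1 := by
    rintro p q ⟨hini, hdyn⟩
    unfold qdpObj
    have hterm : ∀ k ∈ range N,
        (p k ⬝ᵥ Q k *ᵥ p k + 2 * (q k ⬝ᵥ S k *ᵥ p k) + q k ⬝ᵥ R k *ᵥ q k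
          + 2 * (l k ⬝ᵥ D1 k *ᵥ p k) + 2 * (l k ⬝ᵥ D2 k *ᵥ q k))
        = ((q k - (P k *ᵥ p k - (W k)⁻¹ *ᵥ hvv k)) ⬝ᵥ
            W k *ᵥ (q k - (P k *ᵥ p k - (W k)⁻¹ *ᵥ hvv k))
          + ((fun i => vf i (p i)) k - (fun i => vf i (p i)) (k+1))) := by
      intro k hk
      have hkN := Finset.mem_range.mp hk
      have hvs := vstep k hkN (p k) (q k)
      rw [← hdyn k hkN] at hvs
      simp only
      linarith
    rw [Finset.sum_congr rfl hterm, Finset.sum_add_distrib, Finset.range_eq_Ico,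
      sum_Ico_tele (fun i => vf i (p i)) 0 N (Nat.zero_le N)]
    have hvfN : vf N (p N) = p N ⬝ᵥ Q N *ᵥ p N := by
      have hg : gv N = 0 := gA_N N K E P C D1 D2 l
      have hc : cv N = 0 := by rw [hcv]; simp
      rw [hvf]
      simp only [hg, hc, hKN, zero_dotProduct, mul_zero, add_zero]
    rw [hvfN, hini]
    ring
  -- optimal trajectory
  set pst : ℕ → Fin nx → ℝ := fun k => Nat.rec lm1
    (fun j pj => A j *ᵥ pj + B j *ᵥ (P j *ᵥ pj - (W j)⁻¹ *ᵥ hvv j) + C j *ᵥ l j) k with hpst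
  set qst : ℕ → Fin nu → ℝ := fun k => P k *ᵥ pst k - (W k)⁻¹ *ᵥ hvv k with hqst
  have hpstsucc : ∀ k, pst (k+1)
      = A k *ᵥ pst k + B k *ᵥ (P k *ᵥ pst k - (W k)⁻¹ *ᵥ hvv k) + C k *ᵥ l k :=
    fun k => rfl
  have hfeas : Feas N A B C lm1 l pst qst := ⟨rfl, fun k hk => hpstsucc k⟩
  have hJst : qdpObj N Q R S D1 D2 l pst qst = vf 0 lm1 := by
    rw [master pst qst hfeas]
    have hz : ∀ k ∈ range N, (qst k - (P k *ᵥ pst k - (W k)⁻¹ *ᵥ hvv k)) ⬝ᵥ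
        W k *ᵥ (qst k - (P k *ᵥ pst k - (W k)⁻¹ *ᵥ hvv k)) = 0 := by
      intro k _
      rw [hqst]
      simp
    rw [Finset.sum_eq_zero hz, zero_add]
  refine ⟨pst, qst, hfeas, ?_, ?_, ?_⟩
  · intro p' q' hf
    rw [hJst, master p' q' hf]
    have h0 : 0 ≤ ∑ k ∈ range N, (q' k - (P k *ᵥ p' k - (W k)⁻¹ *ᵥ hvv k)) ⬝ᵥ
        W k *ᵥ (q' k - (P k *ᵥ p' k - (W k)⁻¹ *ᵥ hvv k)) :=
      Finset.sum_nonneg fun k hk => pd_nonneg _ (hWpd k (mem_range.mp hk)) _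
    linarith
  · intro p' q' hf hle
    rw [master p' q' hf, hJst] at hle
    have h0 : ∀ k ∈ range N, 0 ≤ (q' k - (P k *ᵥ p' k - (W k)⁻¹ *ᵥ hvv k)) ⬝ᵥ
        W k *ᵥ (q' k - (P k *ᵥ p' k - (W k)⁻¹ *ᵥ hvv k)) :=
      fun k hk => pd_nonneg _ (hWpd k (mem_range.mp hk)) _
    have hsum0 : ∑ k ∈ range N, (q' k - (P k *ᵥ p' k - (W k)⁻¹ *ᵥ hvv k)) ⬝ᵥ
        W k *ᵥ (q' k - (P k *ᵥ p' k - (W k)⁻¹ *ᵥ hvv k)) = 0 :=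
      le_antisymm (by linarith) (Finset.sum_nonneg h0)
    have hterms := (Finset.sum_eq_zero_iff_of_nonneg h0).mp hsum0
    have hq'f : ∀ k, k < N → q' k = P k *ᵥ p' k - (W k)⁻¹ *ᵥ hvv k := by
      intro k hk
      by_contra hne
      have hrne : q' k - (P k *ᵥ p' k - (W k)⁻¹ *ᵥ hvv k) ≠ 0 := sub_ne_zero.mpr hne
      exact absurd (hterms k (mem_range.mpr hk)) (ne_of_gt (hWpd k hk _ hrne))
    have hp'eq : ∀ k, k ≤ N → p' k = pst k := by
      intro k
      induction k with
      | zero => intro _; rw [hf.1]; rfl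
      | succ k ihk =>
        intro hk1
        have hkN : k < N := by omega
        rw [hf.2 k hkN, hq'f k hkN, ihk (by omega), hpstsucc k]
    exact ⟨hp'eq, fun k hk => by rw [hq'f k hk, hp'eq k (le_of_lt hk), hqst]⟩
  · intro k hk
    have hsum : (∑ i ∈ Ico (k+1) N, (Mmat D1 D2 P E i (k+1))ᵀ *ᵥ l i)
        + (∑ i ∈ Ico (k+1) N, ((Vmat K E i (k+1))ᵀ * C i) *ᵥ l i) = -gv (k+1) := by
      rw [← Finset.sum_add_distrib, hgv]
      unfold gA
      rw [← Finset.sum_neg_distrib]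
      apply Finset.sum_congr rfl
      intro i hi
      obtain ⟨hi1, hi2⟩ := Finset.mem_Ico.mp hi
      have hKs := hKsymm (i+1) hi2
      unfold Mmat Vmat
      rw [Matrix.transpose_neg, Matrix.transpose_neg, Matrix.transpose_mul,
        Matrix.transpose_mul, Matrix.neg_mul, neg_mulVec, neg_mulVec, hKs,
        ← neg_add]
      congr 1
      rw [← mulVec_mulVec, Matrix.mul_assoc, ← mulVec_mulVec, ← mulVec_mulVec]
    have hM : ((W k)⁻¹ * (B k)ᵀ) *ᵥ (∑ i ∈ Ico (k+1) N, (Mmat D1 D2 P E i (k+1))ᵀ *ᵥ l i)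
        + ((W k)⁻¹ * (B k)ᵀ) *ᵥ (∑ i ∈ Ico (k+1) N, ((Vmat K E i (k+1))ᵀ * C i) *ᵥ l i)
        = -(((W k)⁻¹ * (B k)ᵀ) *ᵥ gv (k+1)) := by
      rw [← mulVec_add, hsum, mulVec_neg]
    rw [add_assoc (P k *ᵥ pst k), hM]
    simp only [hqst, hhvv, mulVec_add, mulVec_neg, ← mulVec_mulVec]
    abel
end

section
/- Closed form of the optimal state trajectory (Lemma 6.1): Assume SOSC, and let (p*, q*) be the unique global minimizer of the QDP with direction l. For i ∈ {0,…,N−1} and k ∈ {0,…,N}, define O_k = B_kW_k⁻¹B_kᵀ, U_i^k = Σ_{s=0}^{min(i,k)−1} (E_{k−1}E_{k−2}⋯E_{s+1}) O_s (M_i^{s+1})ᵀ − [i+1 ≤ k]·(E_{k−1}⋯E_{i+1}) B_i W_i⁻¹ D_{i2}ᵀ and F_i^k = Σ_{s=0}^{min(i,k)−1} (E_{k−1}⋯E_{s+1}) O_s (V_i^{s+1})ᵀ + [i+1 ≤ k]·(E_{k−1}⋯E_{i+1}) (I − O_iK_{i+1}), where [·] denotes the indicator (1 if the condition holds, 0 otherwise)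 and empty products of the E's are the identity. Then for every k ∈ {0,…,N}: p*_k = (E_{k−1}E_{k−2}⋯E_0) l_{−1} + Σ_{i=0}^{N−1} U_i^k l_i + Σ_{i=0}^{N−1} F_i^k C_i l_i. -/
open Matrix BigOperators Finset

/-- `O_k = B_k W_k⁻¹ B_kᵀ`. -/
noncomputable def Okm {nx nu : ℕ} (B : ℕ → Matrix (Fin nx) (Fin nu) ℝ)
    (W : ℕ → Matrix (Fin nu) (Fin nu) ℝ) (k : ℕ) : Matrix (Fin nx) (Fin nx) ℝ :=
  B k * (W k)⁻¹ * (B k)ᵀ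

/-- The sensitivity kernel `U_i^k`. -/
noncomputable def Umat {nx nu nd : ℕ} (B : ℕ → Matrix (Fin nx) (Fin nu) ℝ)
    (W : ℕ → Matrix (Fin nu) (Fin nu) ℝ) (P : ℕ → Matrix (Fin nu) (Fin nx) ℝ)
    (E : ℕ → Matrix (Fin nx) (Fin nx) ℝ)
    (D1 : ℕ → Matrix (Fin nd) (Fin nx) ℝ) (D2 : ℕ → Matrix (Fin nd) (Fin nu) ℝ)
    (i k : ℕ) : Matrix (Fin nx) (Fin nd) ℝ :=
  (∑ s ∈ range (min i k),
      prodE E (s + 1) (k - 1 - s) * Okm B W s * (Mmat D1 D2 P E i (s + 1))ᵀ)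
    - (if i + 1 ≤ k then prodE E (i + 1) (k - 1 - i) * B i * (W i)⁻¹ * (D2 i)ᵀ else 0)

/-- The sensitivity kernel `F_i^k`. -/
noncomputable def Fmat {nx nu : ℕ} (B : ℕ → Matrix (Fin nx) (Fin nu) ℝ)
    (W : ℕ → Matrix (Fin nu) (Fin nu) ℝ)
    (K E : ℕ → Matrix (Fin nx) (Fin nx) ℝ) (i k : ℕ) : Matrix (Fin nx) (Fin nx) ℝ :=
  (∑ s ∈ range (min i k),
      prodE E (s + 1) (k - 1 - s) * Okm B W s * (Vmat K E i (s + 1))ᵀ)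
    + (if i + 1 ≤ k then prodE E (i + 1) (k - 1 - i) * (1 - Okm B W i * K (i + 1)) else 0)

namespace QDPAux


lemma prodE_succ {n : ℕ} (E : ℕ → Matrix (Fin n) (Fin n) ℝ) (i len : ℕ) :
    prodE E i (len+1) = E (i+len) * prodE E i len := rfl

lemma prodE_zero {n : ℕ} (E : ℕ → Matrix (Fin n) (Fin n) ℝ) (i : ℕ) :
    prodE E i 0 = 1 := rfl

lemma prodE_cut {n : ℕ} (E : ℕ → Matrix (Fin n) (Fin n) ℝ) {s k : ℕ} (h : s < k) :
    prodE E (s+1) (k - s) = E k * prodE E (s+1) (k - 1 - s) := by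
  have h1 : k - s = (k - 1 - s) + 1 := by omega
  have h2 : s + 1 + (k - 1 - s) = k := by omega
  rw [h1, prodE_succ, h2]

lemma prodE_succ_left {n : ℕ} (E : ℕ → Matrix (Fin n) (Fin n) ℝ) :
    ∀ len i, prodE E i (len+1) = prodE E (i+1) len * E i := by
  intro len
  induction len with
  | zero => intro i; simp [prodE_succ, prodE_zero]
  | succ m ih =>
      intro i
      rw [prodE_succ, ih, prodE_succ, show i + (m+1) = i + 1 + m by omega, Matrix.mul_assoc]

lemma mulVec_sumv {n m : ℕ} (M : Matrix (Fin n) (Fin m) ℝ) (s : Finset ℕ) (f : ℕ → Fin m → ℝ) :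
    M *ᵥ (∑ i ∈ s, f i) = ∑ i ∈ s, M *ᵥ f i := by
  have := map_sum M.mulVecLin f s
  simp only [Matrix.mulVecLin_apply] at this; exact this

lemma dot_trans {n m : ℕ} (M : Matrix (Fin n) (Fin m) ℝ) (x : Fin m → ℝ) (y : Fin n → ℝ) :
    x ⬝ᵥ Mᵀ *ᵥ y = (M *ᵥ x) ⬝ᵥ y := by
  rw [Matrix.dotProduct_mulVec, Matrix.vecMul_transpose]

lemma dot_symm {n : ℕ} (M : Matrix (Fin n) (Fin n) ℝ) (h : Mᵀ = M) (x y : Fin n → ℝ) :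
    x ⬝ᵥ M *ᵥ y = y ⬝ᵥ M *ᵥ x := by
  conv_lhs => rw [← h]
  rw [dot_trans, dotProduct_comm]

lemma sum_Ico_telescope (f : ℕ → ℝ) {a b : ℕ} (h : a ≤ b) :
    ∑ j ∈ Ico a b, (f j - f (j+1)) = f a - f b := by
  induction b, h using Nat.le_induction with
  | base => simp
  | succ b hb ih => rw [Finset.sum_Ico_succ_top hb, ih]; ring

lemma bil_zero_of_nonneg {b c : ℝ} (h : ∀ t : ℝ, 0 ≤ t * b + t^2 * c) : b = 0 := by
  rcases eq_or_ne b 0 with h0 | h0; · exact h0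
  have h1 := h 1; have h2 := h (-1)
  have hc : 0 < c := by nlinarith [sq_abs b, abs_pos.2 h0]
  have h3 := h (-b / (2*c))
  have he : (-b/(2*c)) * b + (-b/(2*c))^2 * c = -(b^2/(4*c)) := by field_simp; ring
  rw [he] at h3
  have h4 : 0 ≤ b^2/(4*c) := div_nonneg (sq_nonneg b) (by linarith)
  have h5 : b^2/(4*c) = 0 := le_antisymm (by linarith) h4
  have h6 : b^2 = 0 := by
    rcases div_eq_zero_iff.1 h5 with h | h
    · exact h
    · linarith
  exact absurd (pow_eq_zero_iff (by norm_num) |>.1 h6) h0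

lemma posdef_det_isUnit {n : ℕ} (M : Matrix (Fin n) (Fin n) ℝ)
    (hpos : ∀ u, u ≠ 0 → 0 < u ⬝ᵥ M *ᵥ u) : IsUnit M.det := by
  rw [isUnit_iff_ne_zero]
  intro h
  obtain ⟨v, hv, hv0⟩ := (Matrix.exists_mulVec_eq_zero_iff).2 h
  have := hpos v hv
  rw [hv0] at this
  simp at this


variable {n m : ℕ}

variable {n m : ℕ}

lemma cancelW {K' : Matrix (Fin n) (Fin n) ℝ} {B : Matrix (Fin n) (Fin m) ℝ}
    {R W : Matrix (Fin m) (Fin m) ℝ}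
    (hWWi : W * W⁻¹ = 1) (hW : W = R + Bᵀ * K' * B) :
    ∀ X : Matrix (Fin m) (Fin n) ℝ,
      R * (W⁻¹ * X) + Bᵀ * (K' * (B * (W⁻¹ * X))) = X := by
  intro X
  calc R * (W⁻¹ * X) + Bᵀ * (K' * (B * (W⁻¹ * X)))
      = (R + Bᵀ * K' * B) * (W⁻¹ * X) := by
        simp only [Matrix.add_mul, Matrix.mul_assoc]
    _ = W * (W⁻¹ * X) := by rw [← hW]
    _ = X := by rw [← Matrix.mul_assoc, hWWi, Matrix.one_mul]

lemma fact1 {A K' E : Matrix (Fin n) (Fin n) ℝ} {B : Matrix (Fin n) (Fin m) ℝ}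
    {S P G : Matrix (Fin m) (Fin n) ℝ} {R W : Matrix (Fin m) (Fin m) ℝ}
    (hG : G = Bᵀ * K' * A + S)
    (hWWi : W * W⁻¹ = 1) (hW : W = R + Bᵀ * K' * B)
    (hP : P = -(W⁻¹ * G)) (hE : E = A + B * P) :
    S + R * P + Bᵀ * K' * E = 0 := by
  have cancel := cancelW hWWi hW
  calc S + R * P + Bᵀ * K' * E
      = (Bᵀ * (K' * A) + S) - (R * (W⁻¹ * G) + Bᵀ * (K' * (B * (W⁻¹ * G)))) := by
        rw [hE, hP]
        simp only [Matrix.mul_add, Matrix.mul_neg, Matrix.neg_mul, Matrix.mul_assoc]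
        abel
    _ = (Bᵀ * (K' * A) + S) - G := by rw [cancel]
    _ = 0 := by rw [hG, ← Matrix.mul_assoc]; abel

lemma fact3 {A Q K' E Kj : Matrix (Fin n) (Fin n) ℝ} {B : Matrix (Fin n) (Fin m) ℝ}
    {S P G : Matrix (Fin m) (Fin n) ℝ} {W : Matrix (Fin m) (Fin m) ℝ}
    (hG : G = Bᵀ * K' * A + S) (hK't : K'ᵀ = K')
    (hP : P = -(W⁻¹ * G)) (hE : E = A + B * P)
    (hKj : Kj = Q + Aᵀ * K' * A - Gᵀ * W⁻¹ * G) :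
    Kj = Q + Sᵀ * P + Aᵀ * K' * E := by
  have hGt : Gᵀ = Aᵀ * K' * B + Sᵀ := by
    rw [hG, Matrix.transpose_add, Matrix.transpose_mul, Matrix.transpose_mul,
      Matrix.transpose_transpose, hK't, Matrix.mul_assoc]
  rw [hKj, hE, hP, hGt]
  simp only [Matrix.mul_add, Matrix.add_mul, Matrix.mul_neg, Matrix.neg_mul, Matrix.mul_assoc]
  abel

lemma fact4 {A K' : Matrix (Fin n) (Fin n) ℝ} {B : Matrix (Fin n) (Fin m) ℝ}
    {S P G : Matrix (Fin m) (Fin n) ℝ} {W : Matrix (Fin m) (Fin m) ℝ}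
    (hG : G = Bᵀ * K' * A + S)
    (hWiW : W⁻¹ * W = 1) (hWt : Wᵀ = W)
    (hP : P = -(W⁻¹ * G)) :
    Pᵀ * W = -Gᵀ := by
  have hWit : (W⁻¹)ᵀ = W⁻¹ := by rw [Matrix.transpose_nonsing_inv, hWt]
  rw [hP, Matrix.transpose_neg, Matrix.transpose_mul, hWit, Matrix.neg_mul,
    Matrix.mul_assoc, hWiW, Matrix.mul_one]

lemma factK {A Q K' E Kj : Matrix (Fin n) (Fin n) ℝ} {B : Matrix (Fin n) (Fin m) ℝ}
    {S P G : Matrix (Fin m) (Fin n) ℝ} {R W : Matrix (Fin m) (Fin m) ℝ}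
    (hG : G = Bᵀ * K' * A + S) (hK't : K'ᵀ = K')
    (hWWi : W * W⁻¹ = 1) (hWt : Wᵀ = W) (hW : W = R + Bᵀ * K' * B)
    (hP : P = -(W⁻¹ * G)) (hE : E = A + B * P)
    (hKj : Kj = Q + Aᵀ * K' * A - Gᵀ * W⁻¹ * G) :
    Kj = Q + Pᵀ * S + Sᵀ * P + Pᵀ * R * P + Eᵀ * K' * E := by
  have hWit : (W⁻¹)ᵀ = W⁻¹ := by rw [Matrix.transpose_nonsing_inv, hWt]
  have hGt : Gᵀ = Aᵀ * K' * B + Sᵀ := by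
    rw [hG, Matrix.transpose_add, Matrix.transpose_mul, Matrix.transpose_mul,
      Matrix.transpose_transpose, hK't, Matrix.mul_assoc]
  have hPt : Pᵀ = -(Gᵀ * W⁻¹) := by
    rw [hP, Matrix.transpose_neg, Matrix.transpose_mul, hWit]
  have hEt : Eᵀ = Aᵀ + -(Gᵀ * (W⁻¹ * Bᵀ)) := by
    rw [hE, hP]
    simp only [Matrix.transpose_add, Matrix.transpose_mul, Matrix.transpose_neg, hWit,
      Matrix.neg_mul, Matrix.mul_assoc]
  have cancel := cancelW hWWi hW
  have c2 : Gᵀ * (W⁻¹ * (Bᵀ * (K' * (B * (W⁻¹ * G)))))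
      = Gᵀ * (W⁻¹ * G) - Gᵀ * (W⁻¹ * (R * (W⁻¹ * G))) := by
    rw [eq_sub_iff_add_eq, add_comm, ← Matrix.mul_add, ← Matrix.mul_add, cancel]
  have c3 : Aᵀ * (K' * (B * (W⁻¹ * G))) = Gᵀ * (W⁻¹ * G) - Sᵀ * (W⁻¹ * G) := by
    calc Aᵀ * (K' * (B * (W⁻¹ * G))) = (Aᵀ * K' * B) * (W⁻¹ * G) := by
          simp only [Matrix.mul_assoc]
      _ = (Gᵀ - Sᵀ) * (W⁻¹ * G) := by rw [hGt]; congr 1; abel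
      _ = Gᵀ * (W⁻¹ * G) - Sᵀ * (W⁻¹ * G) := by rw [Matrix.sub_mul]
  have c4 : Gᵀ * (W⁻¹ * (Bᵀ * (K' * A))) = Gᵀ * (W⁻¹ * G) - Gᵀ * (W⁻¹ * S) := by
    have h5 : Bᵀ * (K' * A) = G - S := by rw [hG, ← Matrix.mul_assoc]; abel
    rw [h5, Matrix.mul_sub, Matrix.mul_sub]
  have T1 : Pᵀ * S = -(Gᵀ * (W⁻¹ * S)) := by
    rw [hPt]; simp only [Matrix.neg_mul, Matrix.mul_assoc]
  have T2 : Sᵀ * P = -(Sᵀ * (W⁻¹ * G)) := by rw [hP, Matrix.mul_neg]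
  have T3 : Pᵀ * R * P = Gᵀ * (W⁻¹ * (R * (W⁻¹ * G))) := by
    rw [hPt, hP]
    simp only [Matrix.neg_mul, Matrix.mul_neg, neg_neg, Matrix.mul_assoc]
  have T4 : Eᵀ * K' * E = Aᵀ * (K' * A) - Aᵀ * (K' * (B * (W⁻¹ * G)))
      - Gᵀ * (W⁻¹ * (Bᵀ * (K' * A))) + Gᵀ * (W⁻¹ * (Bᵀ * (K' * (B * (W⁻¹ * G))))) := by
    rw [hEt, hE, hP]
    simp only [Matrix.mul_add, Matrix.add_mul, Matrix.mul_neg, Matrix.neg_mul, neg_neg,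
      Matrix.mul_assoc]
    abel
  calc Kj = Q + Aᵀ * (K' * A) - Gᵀ * (W⁻¹ * G) := by
        rw [hKj]; simp only [Matrix.mul_assoc]
    _ = Q + Pᵀ * S + Sᵀ * P + Pᵀ * R * P + Eᵀ * K' * E := by
        rw [T1, T2, T3, T4, c2, c3, c4]; abel


lemma stage_eq {n m : ℕ} {Qj K' Kj E : Matrix (Fin n) (Fin n) ℝ}
    {Sj P : Matrix (Fin m) (Fin n) ℝ} {R : Matrix (Fin m) (Fin m) ℝ}
    (hKj : Kj = Qj + Pᵀ * Sj + Sjᵀ * P + Pᵀ * R * P + Eᵀ * K' * E) (x : Fin n → ℝ) :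
    x ⬝ᵥ Qj *ᵥ x + 2 * ((P *ᵥ x) ⬝ᵥ Sj *ᵥ x) + (P *ᵥ x) ⬝ᵥ R *ᵥ (P *ᵥ x)
      = x ⬝ᵥ Kj *ᵥ x - (E *ᵥ x) ⬝ᵥ K' *ᵥ (E *ᵥ x) := by
  rw [hKj]
  simp only [Matrix.add_mulVec, dotProduct_add, ← Matrix.mulVec_mulVec]
  have h1 : x ⬝ᵥ Pᵀ *ᵥ (Sj *ᵥ x) = (P *ᵥ x) ⬝ᵥ (Sj *ᵥ x) := dot_trans P x (Sj *ᵥ x)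
  have h2 : x ⬝ᵥ Sjᵀ *ᵥ (P *ᵥ x) = (Sj *ᵥ x) ⬝ᵥ (P *ᵥ x) := dot_trans Sj x (P *ᵥ x)
  have h3 : x ⬝ᵥ Pᵀ *ᵥ (R *ᵥ (P *ᵥ x)) = (P *ᵥ x) ⬝ᵥ (R *ᵥ (P *ᵥ x)) :=
    dot_trans P x (R *ᵥ (P *ᵥ x))
  have h4 : x ⬝ᵥ Eᵀ *ᵥ (K' *ᵥ (E *ᵥ x)) = (E *ᵥ x) ⬝ᵥ (K' *ᵥ (E *ᵥ x)) :=
    dot_trans E x (K' *ᵥ (E *ᵥ x))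
  rw [h1, h2, h3, h4, dotProduct_comm (Sj *ᵥ x) (P *ᵥ x)]
  ring

end QDPAux

open QDPAux

noncomputable def rvec {nx nu nd : ℕ} (N : ℕ) (K E : ℕ → Matrix (Fin nx) (Fin nx) ℝ)
    (C : ℕ → Matrix (Fin nx) (Fin nd) ℝ) (D1 : ℕ → Matrix (Fin nd) (Fin nx) ℝ)
    (D2 : ℕ → Matrix (Fin nd) (Fin nu) ℝ) (P : ℕ → Matrix (Fin nu) (Fin nx) ℝ)
    (l : ℕ → Fin nd → ℝ) (k : ℕ) : Fin nx → ℝ :=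
  -∑ i ∈ Ico k N, ((Mmat D1 D2 P E i k)ᵀ *ᵥ l i + (Vmat K E i k)ᵀ *ᵥ (C i *ᵥ l i))

noncomputable def vvec {nx nu nd : ℕ} (N : ℕ) (K E : ℕ → Matrix (Fin nx) (Fin nx) ℝ)
    (B : ℕ → Matrix (Fin nx) (Fin nu) ℝ) (W : ℕ → Matrix (Fin nu) (Fin nu) ℝ)
    (C : ℕ → Matrix (Fin nx) (Fin nd) ℝ) (D1 : ℕ → Matrix (Fin nd) (Fin nx) ℝ)
    (D2 : ℕ → Matrix (Fin nd) (Fin nu) ℝ) (P : ℕ → Matrix (Fin nu) (Fin nx) ℝ)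
    (l : ℕ → Fin nd → ℝ) (k : ℕ) : Fin nu → ℝ :=
  -((W k)⁻¹ *ᵥ ((B k)ᵀ *ᵥ (K (k+1) *ᵥ (C k *ᵥ l k)) + (D2 k)ᵀ *ᵥ l k
      + (B k)ᵀ *ᵥ rvec N K E C D1 D2 P l (k+1)))

noncomputable def phat {nx nu nd : ℕ} (N : ℕ) (K E : ℕ → Matrix (Fin nx) (Fin nx) ℝ)
    (B : ℕ → Matrix (Fin nx) (Fin nu) ℝ) (W : ℕ → Matrix (Fin nu) (Fin nu) ℝ)
    (C : ℕ → Matrix (Fin nx) (Fin nd) ℝ) (D1 : ℕ → Matrix (Fin nd) (Fin nx) ℝ)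
    (D2 : ℕ → Matrix (Fin nd) (Fin nu) ℝ) (P : ℕ → Matrix (Fin nu) (Fin nx) ℝ)
    (l : ℕ → Fin nd → ℝ) (lm1 : Fin nx → ℝ) : ℕ → Fin nx → ℝ
  | 0 => lm1
  | (k+1) => E k *ᵥ phat N K E B W C D1 D2 P l lm1 k
      + B k *ᵥ vvec N K E B W C D1 D2 P l k + C k *ᵥ l k

/-- First-order (bilinear) part of the objective expansion. -/
noncomputable def BilJ {nx nu nd : ℕ} (N : ℕ)
    (Q : ℕ → Matrix (Fin nx) (Fin nx) ℝ) (R : ℕ → Matrix (Fin nu) (Fin nu) ℝ)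
    (S : ℕ → Matrix (Fin nu) (Fin nx) ℝ) (D1 : ℕ → Matrix (Fin nd) (Fin nx) ℝ)
    (D2 : ℕ → Matrix (Fin nd) (Fin nu) ℝ) (l : ℕ → Fin nd → ℝ)
    (p : ℕ → Fin nx → ℝ) (q : ℕ → Fin nu → ℝ)
    (dp : ℕ → Fin nx → ℝ) (dq : ℕ → Fin nu → ℝ) : ℝ :=
  (∑ k ∈ range N,
      (dp k ⬝ᵥ Q k *ᵥ p k + p k ⬝ᵥ Q k *ᵥ dp k + 2 * (dq k ⬝ᵥ S k *ᵥ p k)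
        + 2 * (q k ⬝ᵥ S k *ᵥ dp k) + dq k ⬝ᵥ R k *ᵥ q k + q k ⬝ᵥ R k *ᵥ dq k
        + 2 * (l k ⬝ᵥ D1 k *ᵥ dp k) + 2 * (l k ⬝ᵥ D2 k *ᵥ dq k)))
    + dp N ⬝ᵥ Q N *ᵥ p N + p N ⬝ᵥ Q N *ᵥ dp N

/-- Second-order (quadratic) part of the objective expansion. -/
noncomputable def QuadJ {nx nu : ℕ} (N : ℕ)
    (Q : ℕ → Matrix (Fin nx) (Fin nx) ℝ) (R : ℕ → Matrix (Fin nu) (Fin nu) ℝ)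
    (S : ℕ → Matrix (Fin nu) (Fin nx) ℝ)
    (dp : ℕ → Fin nx → ℝ) (dq : ℕ → Fin nu → ℝ) : ℝ :=
  (∑ k ∈ range N,
      (dp k ⬝ᵥ Q k *ᵥ dp k + 2 * (dq k ⬝ᵥ S k *ᵥ dp k) + dq k ⬝ᵥ R k *ᵥ dq k))
    + dp N ⬝ᵥ Q N *ᵥ dp N

lemma qdpObj_expand {nx nu nd : ℕ} (N : ℕ)
    (Q : ℕ → Matrix (Fin nx) (Fin nx) ℝ) (R : ℕ → Matrix (Fin nu) (Fin nu) ℝ)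
    (S : ℕ → Matrix (Fin nu) (Fin nx) ℝ) (D1 : ℕ → Matrix (Fin nd) (Fin nx) ℝ)
    (D2 : ℕ → Matrix (Fin nd) (Fin nu) ℝ) (l : ℕ → Fin nd → ℝ)
    (p : ℕ → Fin nx → ℝ) (q : ℕ → Fin nu → ℝ)
    (dp : ℕ → Fin nx → ℝ) (dq : ℕ → Fin nu → ℝ) (t : ℝ) :
    qdpObj N Q R S D1 D2 l (fun k => p k + t • dp k) (fun k => q k + t • dq k)
      = qdpObj N Q R S D1 D2 l p q + t * BilJ N Q R S D1 D2 l p q dp dq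
        + t^2 * QuadJ N Q R S dp dq := by
  unfold qdpObj BilJ QuadJ
  have key : ∀ k,
      (p k + t • dp k) ⬝ᵥ Q k *ᵥ (p k + t • dp k)
        + 2 * ((q k + t • dq k) ⬝ᵥ S k *ᵥ (p k + t • dp k))
        + (q k + t • dq k) ⬝ᵥ R k *ᵥ (q k + t • dq k)
        + 2 * (l k ⬝ᵥ D1 k *ᵥ (p k + t • dp k))
        + 2 * (l k ⬝ᵥ D2 k *ᵥ (q k + t • dq k))
      = (p k ⬝ᵥ Q k *ᵥ p k + 2 * (q k ⬝ᵥ S k *ᵥ p k) + q k ⬝ᵥ R k *ᵥ q k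
          + 2 * (l k ⬝ᵥ D1 k *ᵥ p k) + 2 * (l k ⬝ᵥ D2 k *ᵥ q k))
        + t * (dp k ⬝ᵥ Q k *ᵥ p k + p k ⬝ᵥ Q k *ᵥ dp k + 2 * (dq k ⬝ᵥ S k *ᵥ p k)
          + 2 * (q k ⬝ᵥ S k *ᵥ dp k) + dq k ⬝ᵥ R k *ᵥ q k + q k ⬝ᵥ R k *ᵥ dq k
          + 2 * (l k ⬝ᵥ D1 k *ᵥ dp k) + 2 * (l k ⬝ᵥ D2 k *ᵥ dq k))
        + t^2 * (dp k ⬝ᵥ Q k *ᵥ dp k + 2 * (dq k ⬝ᵥ S k *ᵥ dp k) + dq k ⬝ᵥ R k *ᵥ dq k) := by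
    intro k
    simp only [Matrix.mulVec_add, Matrix.mulVec_smul, dotProduct_add, add_dotProduct,
      dotProduct_smul, smul_dotProduct, smul_eq_mul]
    ring
  have keyT : (p N + t • dp N) ⬝ᵥ Q N *ᵥ (p N + t • dp N)
      = p N ⬝ᵥ Q N *ᵥ p N + t * (dp N ⬝ᵥ Q N *ᵥ p N + p N ⬝ᵥ Q N *ᵥ dp N)
        + t^2 * (dp N ⬝ᵥ Q N *ᵥ dp N) := by
    simp only [Matrix.mulVec_add, Matrix.mulVec_smul, dotProduct_add, add_dotProduct,
      dotProduct_smul, smul_dotProduct, smul_eq_mul]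
    ring
  rw [Finset.sum_congr rfl (fun k _ => key k), keyT]
  rw [Finset.sum_add_distrib, Finset.sum_add_distrib, ← Finset.mul_sum, ← Finset.mul_sum]
  ring

lemma BilJ_shift {nx nu nd : ℕ} (N : ℕ)
    (Q : ℕ → Matrix (Fin nx) (Fin nx) ℝ) (R : ℕ → Matrix (Fin nu) (Fin nu) ℝ)
    (S : ℕ → Matrix (Fin nu) (Fin nx) ℝ) (D1 : ℕ → Matrix (Fin nd) (Fin nx) ℝ)
    (D2 : ℕ → Matrix (Fin nd) (Fin nu) ℝ) (l : ℕ → Fin nd → ℝ)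
    (p : ℕ → Fin nx → ℝ) (q : ℕ → Fin nu → ℝ)
    (dp : ℕ → Fin nx → ℝ) (dq : ℕ → Fin nu → ℝ) :
    BilJ N Q R S D1 D2 l (fun k => p k + dp k) (fun k => q k + dq k) dp dq
      = BilJ N Q R S D1 D2 l p q dp dq + 2 * QuadJ N Q R S dp dq := by
  unfold BilJ QuadJ
  have key : ∀ k,
      (dp k ⬝ᵥ Q k *ᵥ (p k + dp k) + (p k + dp k) ⬝ᵥ Q k *ᵥ dp k
        + 2 * (dq k ⬝ᵥ S k *ᵥ (p k + dp k)) + 2 * ((q k + dq k) ⬝ᵥ S k *ᵥ dp k)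
        + dq k ⬝ᵥ R k *ᵥ (q k + dq k) + (q k + dq k) ⬝ᵥ R k *ᵥ dq k
        + 2 * (l k ⬝ᵥ D1 k *ᵥ dp k) + 2 * (l k ⬝ᵥ D2 k *ᵥ dq k))
      = (dp k ⬝ᵥ Q k *ᵥ p k + p k ⬝ᵥ Q k *ᵥ dp k + 2 * (dq k ⬝ᵥ S k *ᵥ p k)
          + 2 * (q k ⬝ᵥ S k *ᵥ dp k) + dq k ⬝ᵥ R k *ᵥ q k + q k ⬝ᵥ R k *ᵥ dq k
          + 2 * (l k ⬝ᵥ D1 k *ᵥ dp k) + 2 * (l k ⬝ᵥ D2 k *ᵥ dq k))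
        + (dp k ⬝ᵥ Q k *ᵥ dp k + dp k ⬝ᵥ Q k *ᵥ dp k + 2 * (dq k ⬝ᵥ S k *ᵥ dp k)
          + 2 * (dq k ⬝ᵥ S k *ᵥ dp k) + dq k ⬝ᵥ R k *ᵥ dq k + dq k ⬝ᵥ R k *ᵥ dq k) := by
    intro k
    simp only [Matrix.mulVec_add, dotProduct_add, add_dotProduct]
    ring
  rw [Finset.sum_congr rfl (fun k _ => key k), Finset.sum_add_distrib]
  have keyT1 : dp N ⬝ᵥ Q N *ᵥ (p N + dp N) = dp N ⬝ᵥ Q N *ᵥ p N + dp N ⬝ᵥ Q N *ᵥ dp N := by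
    simp only [Matrix.mulVec_add, dotProduct_add]
  have keyT2 : (p N + dp N) ⬝ᵥ Q N *ᵥ dp N = p N ⬝ᵥ Q N *ᵥ dp N + dp N ⬝ᵥ Q N *ᵥ dp N := by
    simp only [add_dotProduct]
  rw [keyT1, keyT2]
  have hsplit : ∑ k ∈ range N,
      (dp k ⬝ᵥ Q k *ᵥ dp k + dp k ⬝ᵥ Q k *ᵥ dp k + 2 * (dq k ⬝ᵥ S k *ᵥ dp k)
        + 2 * (dq k ⬝ᵥ S k *ᵥ dp k) + dq k ⬝ᵥ R k *ᵥ dq k + dq k ⬝ᵥ R k *ᵥ dq k)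
      = 2 * ∑ k ∈ range N,
        (dp k ⬝ᵥ Q k *ᵥ dp k + 2 * (dq k ⬝ᵥ S k *ᵥ dp k) + dq k ⬝ᵥ R k *ᵥ dq k) := by
    rw [Finset.mul_sum]
    exact Finset.sum_congr rfl (fun k _ => by ring)
  rw [hsplit]
  ring

lemma rvec_rec {nx nu nd : ℕ} (N : ℕ) (K E : ℕ → Matrix (Fin nx) (Fin nx) ℝ)
    (C : ℕ → Matrix (Fin nx) (Fin nd) ℝ) (D1 : ℕ → Matrix (Fin nd) (Fin nx) ℝ)
    (D2 : ℕ → Matrix (Fin nd) (Fin nu) ℝ) (P : ℕ → Matrix (Fin nu) (Fin nx) ℝ)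
    (l : ℕ → Fin nd → ℝ) (k : ℕ) (hk : k < N) (hKs : (K (k+1))ᵀ = K (k+1)) :
    rvec N K E C D1 D2 P l k
      = (E k)ᵀ *ᵥ (K (k+1) *ᵥ (C k *ᵥ l k) + rvec N K E C D1 D2 P l (k+1))
        + (D1 k + D2 k * P k)ᵀ *ᵥ l k := by
  have hMk : Mmat D1 D2 P E k k = -(D1 k + D2 k * P k) := by
    simp [Mmat, Nat.sub_self, prodE]
  have hVk : (Vmat K E k k)ᵀ = -((E k)ᵀ * K (k+1)) := by
    have h1 : Vmat K E k k = -(K (k+1) * E k) := by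
      simp [Vmat, show k + 1 - k = 1 by omega, prodE]
    rw [h1, Matrix.transpose_neg, Matrix.transpose_mul, hKs]
  have hM : ∀ i, k+1 ≤ i → (Mmat D1 D2 P E i k)ᵀ = (E k)ᵀ * (Mmat D1 D2 P E i (k+1))ᵀ := by
    intro i hi
    have h1 : Mmat D1 D2 P E i k = Mmat D1 D2 P E i (k+1) * E k := by
      unfold Mmat
      rw [show i - k = (i - (k+1)) + 1 by omega, QDPAux.prodE_succ_left,
        Matrix.neg_mul, Matrix.mul_assoc]
    rw [h1, Matrix.transpose_mul]
  have hV : ∀ i, k+1 ≤ i → (Vmat K E i k)ᵀ = (E k)ᵀ * (Vmat K E i (k+1))ᵀ := by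
    intro i hi
    have h1 : Vmat K E i k = Vmat K E i (k+1) * E k := by
      unfold Vmat
      rw [show i + 1 - k = (i + 1 - (k+1)) + 1 by omega, QDPAux.prodE_succ_left,
        Matrix.neg_mul, Matrix.mul_assoc]
    rw [h1, Matrix.transpose_mul]
  unfold rvec
  rw [Finset.sum_eq_sum_Ico_succ_bot hk]
  have hsum : ∀ i ∈ Ico (k+1) N,
      ((Mmat D1 D2 P E i k)ᵀ *ᵥ l i + (Vmat K E i k)ᵀ *ᵥ (C i *ᵥ l i))
      = (E k)ᵀ *ᵥ ((Mmat D1 D2 P E i (k+1))ᵀ *ᵥ l i + (Vmat K E i (k+1))ᵀ *ᵥ (C i *ᵥ l i)) := by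
    intro i hi
    rw [hM i (Finset.mem_Ico.1 hi).1, hV i (Finset.mem_Ico.1 hi).1]
    rw [Matrix.mulVec_add, ← Matrix.mulVec_mulVec, ← Matrix.mulVec_mulVec]
  rw [Finset.sum_congr rfl hsum, ← QDPAux.mulVec_sumv]
  rw [hMk, hVk]
  simp only [Matrix.transpose_neg, Matrix.transpose_add, Matrix.neg_mulVec,
    Matrix.mulVec_add, neg_add_rev, ← Matrix.mulVec_mulVec, Matrix.mulVec_neg,
    Matrix.add_mulVec]
  abel

lemma Umat_rec {nx nu nd : ℕ} (B : ℕ → Matrix (Fin nx) (Fin nu) ℝ)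
    (W : ℕ → Matrix (Fin nu) (Fin nu) ℝ) (P : ℕ → Matrix (Fin nu) (Fin nx) ℝ)
    (E : ℕ → Matrix (Fin nx) (Fin nx) ℝ)
    (D1 : ℕ → Matrix (Fin nd) (Fin nx) ℝ) (D2 : ℕ → Matrix (Fin nd) (Fin nu) ℝ)
    (i k : ℕ) :
    Umat B W P E D1 D2 i (k+1) = E k * Umat B W P E D1 D2 i k
      + (if i = k then -(B k * (W k)⁻¹ * (D2 k)ᵀ) else 0)
      + (if k < i then Okm B W k * (Mmat D1 D2 P E i (k+1))ᵀ else 0) := by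
  unfold Umat
  have hgen : ∀ (mn : ℕ), mn ≤ k →
      ∑ s ∈ range mn, prodE E (s + 1) (k + 1 - 1 - s) * Okm B W s * (Mmat D1 D2 P E i (s + 1))ᵀ
      = E k * ∑ s ∈ range mn, prodE E (s + 1) (k - 1 - s) * Okm B W s * (Mmat D1 D2 P E i (s + 1))ᵀ := by
    intro mn hmn
    rw [Matrix.mul_sum]
    refine Finset.sum_congr rfl (fun s hs => ?_)
    have hsk : s < k := by have := Finset.mem_range.1 hs; omega
    rw [show k + 1 - 1 - s = k - s by omega, QDPAux.prodE_cut E hsk]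
    simp only [Matrix.mul_assoc]
  rcases lt_or_ge k i with hik | hik
  · rw [if_neg (by omega : ¬ i = k), if_pos hik,
      if_neg (by omega : ¬ i + 1 ≤ k + 1), if_neg (by omega : ¬ i + 1 ≤ k),
      show min i (k+1) = k+1 by omega, show min i k = k by omega,
      Finset.sum_range_succ, hgen k le_rfl,
      show k + 1 - 1 - k = 0 by omega]
    simp only [prodE, Matrix.one_mul, sub_zero, add_zero]
  · rw [show min i (k+1) = i by omega, show min i k = i by omega,
      hgen i hik, if_pos (by omega : i + 1 ≤ k + 1), if_neg (by omega : ¬ k < i)]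
    rcases eq_or_lt_of_le hik with heq | hlt
    · subst heq
      rw [if_pos rfl, if_neg (by omega : ¬ i + 1 ≤ i),
        show i + 1 - 1 - i = 0 by omega]
      simp only [prodE, Matrix.one_mul, sub_zero, add_zero]
      abel
    · rw [if_neg (by omega : ¬ i = k), if_pos (by omega : i + 1 ≤ k),
        show k + 1 - 1 - i = k - i by omega, QDPAux.prodE_cut E hlt]
      simp only [Matrix.mul_assoc, Matrix.mul_sub, add_zero]

lemma Fmat_rec {nx nu : ℕ} (B : ℕ → Matrix (Fin nx) (Fin nu) ℝ)
    (W : ℕ → Matrix (Fin nu) (Fin nu) ℝ)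
    (K E : ℕ → Matrix (Fin nx) (Fin nx) ℝ) (i k : ℕ) :
    Fmat B W K E i (k+1) = E k * Fmat B W K E i k
      + (if i = k then 1 - Okm B W i * K (i+1) else 0)
      + (if k < i then Okm B W k * (Vmat K E i (k+1))ᵀ else 0) := by
  unfold Fmat
  have hgen : ∀ (mn : ℕ), mn ≤ k →
      ∑ s ∈ range mn, prodE E (s + 1) (k + 1 - 1 - s) * Okm B W s * (Vmat K E i (s + 1))ᵀ
      = E k * ∑ s ∈ range mn, prodE E (s + 1) (k - 1 - s) * Okm B W s * (Vmat K E i (s + 1))ᵀ := by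
    intro mn hmn
    rw [Matrix.mul_sum]
    refine Finset.sum_congr rfl (fun s hs => ?_)
    have hsk : s < k := by have := Finset.mem_range.1 hs; omega
    rw [show k + 1 - 1 - s = k - s by omega, QDPAux.prodE_cut E hsk]
    simp only [Matrix.mul_assoc]
  rcases lt_or_ge k i with hik | hik
  · rw [if_neg (by omega : ¬ i = k), if_pos hik,
      if_neg (by omega : ¬ i + 1 ≤ k + 1), if_neg (by omega : ¬ i + 1 ≤ k),
      show min i (k+1) = k+1 by omega, show min i k = k by omega,
      Finset.sum_range_succ, hgen k le_rfl,
      show k + 1 - 1 - k = 0 by omega]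
    simp only [prodE, Matrix.one_mul, add_zero]
  · rw [show min i (k+1) = i by omega, show min i k = i by omega,
      hgen i hik, if_pos (by omega : i + 1 ≤ k + 1), if_neg (by omega : ¬ k < i)]
    rcases eq_or_lt_of_le hik with heq | hlt
    · subst heq
      rw [if_pos rfl, if_neg (by omega : ¬ i + 1 ≤ i),
        show i + 1 - 1 - i = 0 by omega]
      simp only [prodE, Matrix.one_mul, add_zero]
    · rw [if_neg (by omega : ¬ i = k), if_pos (by omega : i + 1 ≤ k),
        show k + 1 - 1 - i = k - i by omega, QDPAux.prodE_cut E hlt]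
      simp only [Matrix.mul_assoc, Matrix.mul_add, add_zero]

/-- **Closed form of the optimal state trajectory (Lemma 6.1).**  Under SOSC, the optimal
states of the QDP satisfy
`p*_k = (E_{k−1}⋯E_0) l_{−1} + Σ_i U_i^k l_i + Σ_i F_i^k C_i l_i`. -/
theorem qdp_optimal_state_closed_form
    (N nx nu nd : ℕ) (hN : 1 ≤ N) (hnx : 1 ≤ nx) (hnu : 1 ≤ nu) (hnd : 1 ≤ nd)
    (A : ℕ → Matrix (Fin nx) (Fin nx) ℝ) (B : ℕ → Matrix (Fin nx) (Fin nu) ℝ)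
    (C : ℕ → Matrix (Fin nx) (Fin nd) ℝ)
    (Q : ℕ → Matrix (Fin nx) (Fin nx) ℝ) (R : ℕ → Matrix (Fin nu) (Fin nu) ℝ)
    (S : ℕ → Matrix (Fin nu) (Fin nx) ℝ)
    (D1 : ℕ → Matrix (Fin nd) (Fin nx) ℝ) (D2 : ℕ → Matrix (Fin nd) (Fin nu) ℝ)
    (hQsymm : ∀ k ≤ N, (Q k).IsSymm) (hRsymm : ∀ k < N, (R k).IsSymm)
    (lm1 : Fin nx → ℝ) (l : ℕ → Fin nd → ℝ)
    (hsosc : SOSC N A B Q R S)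
    (K : ℕ → Matrix (Fin nx) (Fin nx) ℝ) (W : ℕ → Matrix (Fin nu) (Fin nu) ℝ)
    (P : ℕ → Matrix (Fin nu) (Fin nx) ℝ) (E : ℕ → Matrix (Fin nx) (Fin nx) ℝ)
    (hKN : K N = Q N)
    (hW : ∀ k < N, W k = R k + (B k)ᵀ * K (k + 1) * B k)
    (hP : ∀ k < N, P k = -((W k)⁻¹ * ((B k)ᵀ * K (k + 1) * A k + S k)))
    (hK : ∀ k < N, K k =
      Q k + (A k)ᵀ * K (k + 1) * A k
        - ((B k)ᵀ * K (k + 1) * A k + S k)ᵀ * (W k)⁻¹ * ((B k)ᵀ * K (k + 1) * A k + S k))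
    (hE : ∀ k < N, E k = A k + B k * P k)
    (p : ℕ → Fin nx → ℝ) (q : ℕ → Fin nu → ℝ)
    (hfeas : Feas N A B C lm1 l p q)
    (hmin : ∀ p' q', Feas N A B C lm1 l p' q' →
      qdpObj N Q R S D1 D2 l p q ≤ qdpObj N Q R S D1 D2 l p' q') :
    ∀ k ≤ N, p k =
      prodE E 0 k *ᵥ lm1
        + (∑ i ∈ range N, Umat B W P E D1 D2 i k *ᵥ l i)
        + (∑ i ∈ range N, (Fmat B W K E i k * C i) *ᵥ l i) := by
  obtain ⟨hp0, hdynp⟩ := hfeas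
  -- Step A: joint downward induction: K symmetric, W positive definite
  have main : ∀ m : ℕ, m ≤ N →
      (∀ j, N - m ≤ j → j ≤ N → (K j)ᵀ = K j) ∧
      (∀ j, N - m ≤ j → j < N →
        ((W j)ᵀ = W j ∧ ∀ u : Fin nu → ℝ, u ≠ 0 → 0 < u ⬝ᵥ W j *ᵥ u)) := by
    intro m
    induction m with
    | zero =>
        intro _
        refine ⟨fun j hj1 hj2 => ?_, fun j hj1 hj2 => absurd hj2 (by omega)⟩
        have hjN : j = N := by omega
        rw [hjN, hKN]
        exact (hQsymm N le_rfl).eq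
    | succ m ih =>
        intro hm1
        obtain ⟨ihK, ihW⟩ := ih (by omega)
        obtain ⟨k, hkeq⟩ : ∃ k, k = N - (m+1) := ⟨_, rfl⟩
        rw [← hkeq]
        have hkN : k < N := by omega
        have hk1 : k + 1 = N - m := by omega
        have hK1s : (K (k+1))ᵀ = K (k+1) := ihK (k+1) (by omega) (by omega)
        have hWsymk : (W k)ᵀ = W k := by
          rw [hW k hkN]
          simp only [Matrix.transpose_add, Matrix.transpose_mul, Matrix.transpose_transpose,
            hK1s, (hRsymm k hkN).eq, Matrix.mul_assoc]
        have ihWinv : ∀ j, k+1 ≤ j → j < N → W j * (W j)⁻¹ = 1 := by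
          intro j h1 h2
          exact Matrix.mul_nonsing_inv _
            (QDPAux.posdef_det_isUnit _ (ihW j (by omega) h2).2)
        have hfactK : ∀ j, k+1 ≤ j → j < N →
            K j = Q j + (P j)ᵀ * S j + (S j)ᵀ * P j + (P j)ᵀ * R j * P j
              + (E j)ᵀ * K (j+1) * E j := by
          intro j h1 h2
          exact QDPAux.factK rfl (ihK (j+1) (by omega) (by omega)) (ihWinv j h1 h2)
            (ihW j (by omega) h2).1 (hW j h2) (hP j h2) (hE j h2) (hK j h2)
        have hKks : (K k)ᵀ = K k := by
          have hWit : ((W k)⁻¹)ᵀ = (W k)⁻¹ := by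
            rw [Matrix.transpose_nonsing_inv, hWsymk]
          rw [hK k hkN]
          simp only [Matrix.transpose_sub, Matrix.transpose_add, Matrix.transpose_mul,
            Matrix.transpose_transpose, hK1s, hWit, (hQsymm k (le_of_lt hkN)).eq,
            Matrix.mul_assoc]
        have hposk : ∀ u : Fin nu → ℝ, u ≠ 0 → 0 < u ⬝ᵥ W k *ᵥ u := by
          intro u hu
          obtain ⟨z, hz⟩ : ∃ z, z = B k *ᵥ u := ⟨_, rfl⟩
          obtain ⟨pt, hpt⟩ : ∃ pt : ℕ → Fin nx → ℝ,
              pt = fun i => if i ≤ k then 0 else prodE E (k+1) (i - k - 1) *ᵥ z := ⟨_, rfl⟩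
          obtain ⟨qt, hqt⟩ : ∃ qt : ℕ → Fin nu → ℝ,
              qt = fun i => if i < k then 0 else if i = k then u else P i *ᵥ pt i := ⟨_, rfl⟩
          have hpt_le : ∀ i, i ≤ k → pt i = 0 := by intro i hi; simp [hpt, hi]
          have hpt_k1 : pt (k+1) = z := by
            simp [hpt, show ¬ (k+1 ≤ k) by omega, show k+1-k-1 = 0 by omega, prodE,
              Matrix.one_mulVec]
          have hpt_gt : ∀ i, k < i → pt (i+1) = E i *ᵥ pt i := by
            intro i hi
            simp only [hpt, if_neg (by omega : ¬ (i+1 ≤ k)), if_neg (by omega : ¬ (i ≤ k))]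
            rw [show i + 1 - k - 1 = (i - k - 1) + 1 by omega, QDPAux.prodE_succ,
              show k + 1 + (i - k - 1) = i by omega, ← Matrix.mulVec_mulVec]
          have hqt_gt : ∀ i, k < i → qt i = P i *ᵥ pt i := by
            intro i hi
            simp [hqt, if_neg (by omega : ¬ (i < k)), if_neg (by omega : ¬ (i = k))]
          have hdyn : ∀ j, j < N → pt (j+1) = A j *ᵥ pt j + B j *ᵥ qt j := by
            intro j hj
            rcases lt_trichotomy j k with h | h | h
            · rw [hpt_le (j+1) (by omega), hpt_le j (by omega)]
              simp [hqt, if_pos h, Matrix.mulVec_zero]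
            · subst h
              rw [hpt_k1, hpt_le j le_rfl]
              simp [hqt, Matrix.mulVec_zero, hz]
            · rw [hpt_gt j h, hE j hj, hqt_gt j h, Matrix.add_mulVec, ← Matrix.mulVec_mulVec]
          have hnz : ¬ ((∀ j ≤ N, pt j = 0) ∧ ∀ j < N, qt j = 0) := by
            rintro ⟨-, hq⟩
            exact hu (by simpa [hqt] using hq k hkN)
          have hsum := hsosc pt qt (hpt_le 0 (by omega)) hdyn hnz
          -- split the sum
          have hzero : ∀ j ∈ Ico 0 k,
              pt j ⬝ᵥ Q j *ᵥ pt j + 2 * (qt j ⬝ᵥ S j *ᵥ pt j) + qt j ⬝ᵥ R j *ᵥ qt j = 0 := by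
            intro j hj
            have hjk : j < k := (Finset.mem_Ico.1 hj).2
            rw [hpt_le j (by omega)]
            simp [hqt, if_pos hjk, Matrix.mulVec_zero]
          have hstagek :
              pt k ⬝ᵥ Q k *ᵥ pt k + 2 * (qt k ⬝ᵥ S k *ᵥ pt k) + qt k ⬝ᵥ R k *ᵥ qt k
              = u ⬝ᵥ R k *ᵥ u := by
            rw [hpt_le k le_rfl]
            simp [hqt, Matrix.mulVec_zero]
          have htel : ∀ j ∈ Ico (k+1) N,
              pt j ⬝ᵥ Q j *ᵥ pt j + 2 * (qt j ⬝ᵥ S j *ᵥ pt j) + qt j ⬝ᵥ R j *ᵥ qt j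
              = pt j ⬝ᵥ K j *ᵥ pt j - pt (j+1) ⬝ᵥ K (j+1) *ᵥ pt (j+1) := by
            intro j hj
            obtain ⟨hj1, hj2⟩ := Finset.mem_Ico.1 hj
            rw [hqt_gt j (by omega), hpt_gt j (by omega)]
            exact QDPAux.stage_eq (hfactK j hj1 hj2) (pt j)
          have hsplit1 : ∑ j ∈ range N,
              (pt j ⬝ᵥ Q j *ᵥ pt j + 2 * (qt j ⬝ᵥ S j *ᵥ pt j) + qt j ⬝ᵥ R j *ᵥ qt j)
              = (∑ j ∈ Ico 0 (k+1),
                  (pt j ⬝ᵥ Q j *ᵥ pt j + 2 * (qt j ⬝ᵥ S j *ᵥ pt j) + qt j ⬝ᵥ R j *ᵥ qt j))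
                + ∑ j ∈ Ico (k+1) N,
                  (pt j ⬝ᵥ Q j *ᵥ pt j + 2 * (qt j ⬝ᵥ S j *ᵥ pt j) + qt j ⬝ᵥ R j *ᵥ qt j) := by
            rw [Finset.range_eq_Ico,
              Finset.sum_Ico_consecutive _ (by omega : 0 ≤ k+1) (by omega : k+1 ≤ N)]
          have hsplit2 : ∑ j ∈ Ico 0 (k+1),
              (pt j ⬝ᵥ Q j *ᵥ pt j + 2 * (qt j ⬝ᵥ S j *ᵥ pt j) + qt j ⬝ᵥ R j *ᵥ qt j)
              = u ⬝ᵥ R k *ᵥ u := by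
            rw [Finset.sum_Ico_succ_top (by omega : 0 ≤ k), hstagek,
              Finset.sum_eq_zero hzero, zero_add]
          have hsplit3 : ∑ j ∈ Ico (k+1) N,
              (pt j ⬝ᵥ Q j *ᵥ pt j + 2 * (qt j ⬝ᵥ S j *ᵥ pt j) + qt j ⬝ᵥ R j *ᵥ qt j)
              = pt (k+1) ⬝ᵥ K (k+1) *ᵥ pt (k+1) - pt N ⬝ᵥ K N *ᵥ pt N := by
            rw [Finset.sum_congr rfl htel]
            exact QDPAux.sum_Ico_telescope (fun i => pt i ⬝ᵥ K i *ᵥ pt i) (by omega : k+1 ≤ N)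
          rw [hsplit1, hsplit2, hsplit3, hpt_k1, hKN] at hsum
          have hWq : u ⬝ᵥ W k *ᵥ u = u ⬝ᵥ R k *ᵥ u + z ⬝ᵥ K (k+1) *ᵥ z := by
            rw [hW k hkN, Matrix.add_mulVec, dotProduct_add]
            congr 1
            rw [hz, ← Matrix.mulVec_mulVec, ← Matrix.mulVec_mulVec]
            exact QDPAux.dot_trans (B k) u (K (k+1) *ᵥ (B k *ᵥ u))
          rw [hWq]
          linarith
        constructor
        · intro j hj1 hj2
          rcases eq_or_lt_of_le hj1 with he | hl
          · rw [← he]; exact hKks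
          · exact ihK j (by omega) hj2
        · intro j hj1 hj2
          rcases eq_or_lt_of_le hj1 with he | hl
          · rw [← he]; exact ⟨hWsymk, hposk⟩
          · exact ihW j (by omega) hj2
  have hKsym : ∀ j, j ≤ N → (K j)ᵀ = K j := fun j hj => (main N le_rfl).1 j (by omega) hj
  have hWsym : ∀ j, j < N → (W j)ᵀ = W j := fun j hj => ((main N le_rfl).2 j (by omega) hj).1
  have hWpos : ∀ j, j < N → ∀ u : Fin nu → ℝ, u ≠ 0 → 0 < u ⬝ᵥ W j *ᵥ u :=
    fun j hj => ((main N le_rfl).2 j (by omega) hj).2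
  have hWunit : ∀ j, j < N → IsUnit (W j).det :=
    fun j hj => QDPAux.posdef_det_isUnit _ (hWpos j hj)
  have hWWi : ∀ j, j < N → W j * (W j)⁻¹ = 1 :=
    fun j hj => Matrix.mul_nonsing_inv _ (hWunit j hj)
  have hWiW : ∀ j, j < N → (W j)⁻¹ * W j = 1 :=
    fun j hj => Matrix.nonsing_inv_mul _ (hWunit j hj)
  -- abbreviations
  set ph : ℕ → Fin nx → ℝ := phat N K E B W C D1 D2 P l lm1 with hph
  set qh : ℕ → Fin nu → ℝ :=
    fun k => P k *ᵥ phat N K E B W C D1 D2 P l lm1 k + vvec N K E B W C D1 D2 P l k with hqh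
  have hph0 : ph 0 = lm1 := rfl
  have hphS : ∀ k, ph (k+1)
      = E k *ᵥ ph k + B k *ᵥ vvec N K E B W C D1 D2 P l k + C k *ᵥ l k := fun k => rfl
  -- Step B: feasibility of (ph, qh)
  have hfeash : ∀ k, k < N → ph (k+1) = A k *ᵥ ph k + B k *ᵥ qh k + C k *ᵥ l k := by
    intro k hk
    rw [hphS k, hE k hk, hqh]
    simp only [Matrix.add_mulVec, Matrix.mulVec_add, ← Matrix.mulVec_mulVec]
    abel
  -- the difference direction
  set dp : ℕ → Fin nx → ℝ := fun k => ph k - p k with hdp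
  set dq : ℕ → Fin nu → ℝ := fun k => qh k - q k with hdq
  have hdp0 : dp 0 = 0 := by simp [hdp, hph0, hp0]
  have hdpdyn : ∀ k, k < N → dp (k+1) = A k *ᵥ dp k + B k *ᵥ dq k := by
    intro k hk
    simp only [hdp, hdq, hfeash k hk, hdynp k hk, Matrix.mulVec_sub]
    abel
  -- Step C: first-order condition at the minimizer
  have hBilpq : BilJ N Q R S D1 D2 l p q dp dq = 0 := by
    apply QDPAux.bil_zero_of_nonneg (c := QuadJ N Q R S dp dq)
    intro t
    have hfeas_t : Feas N A B C lm1 l (fun k => p k + t • dp k) (fun k => q k + t • dq k) := by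
      constructor
      · simp [hp0, hdp0]
      · intro k hk
        simp only []
        rw [hdynp k hk, hdpdyn k hk]
        simp only [Matrix.mulVec_add, Matrix.mulVec_smul, smul_add]
        abel
    have hle := hmin _ _ hfeas_t
    rw [qdpObj_expand] at hle
    linarith
  -- Step D: stationarity of the candidate
  have hstatq : ∀ k, k < N →
      S k *ᵥ ph k + R k *ᵥ qh k + (D2 k)ᵀ *ᵥ l k
        + (B k)ᵀ *ᵥ (K (k+1) *ᵥ ph (k+1) + rvec N K E C D1 D2 P l (k+1)) = 0 := by
    intro k hk
    have h1 : S k + R k * P k + (B k)ᵀ * K (k+1) * E k = 0 :=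
      QDPAux.fact1 rfl (hWWi k hk) (hW k hk) (hP k hk) (hE k hk)
    have hz : W k *ᵥ vvec N K E B W C D1 D2 P l k
        = -((B k)ᵀ *ᵥ (K (k+1) *ᵥ (C k *ᵥ l k)) + (D2 k)ᵀ *ᵥ l k
            + (B k)ᵀ *ᵥ rvec N K E C D1 D2 P l (k+1)) := by
      show W k *ᵥ (-((W k)⁻¹ *ᵥ _)) = _
      rw [Matrix.mulVec_neg, Matrix.mulVec_mulVec, hWWi k hk, Matrix.one_mulVec]
    have expand : S k *ᵥ ph k + R k *ᵥ qh k + (D2 k)ᵀ *ᵥ l k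
        + (B k)ᵀ *ᵥ (K (k+1) *ᵥ ph (k+1) + rvec N K E C D1 D2 P l (k+1))
        = (S k + R k * P k + (B k)ᵀ * K (k+1) * E k) *ᵥ ph k
          + ((R k + (B k)ᵀ * K (k+1) * B k) *ᵥ vvec N K E B W C D1 D2 P l k
            + ((B k)ᵀ *ᵥ (K (k+1) *ᵥ (C k *ᵥ l k)) + (D2 k)ᵀ *ᵥ l k
              + (B k)ᵀ *ᵥ rvec N K E C D1 D2 P l (k+1))) := by
      rw [hphS k, hqh]
      simp only [Matrix.add_mulVec, Matrix.mulVec_add, ← Matrix.mulVec_mulVec]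
      abel
    rw [expand, ← hW k hk, h1, hz, Matrix.zero_mulVec, neg_add_cancel, add_zero]
  have hstatp : ∀ k, k < N →
      K k *ᵥ ph k + rvec N K E C D1 D2 P l k
        = Q k *ᵥ ph k + (S k)ᵀ *ᵥ qh k + (D1 k)ᵀ *ᵥ l k
          + (A k)ᵀ *ᵥ (K (k+1) *ᵥ ph (k+1) + rvec N K E C D1 D2 P l (k+1)) := by
    intro k hk
    have hK1s : (K (k+1))ᵀ = K (k+1) := hKsym (k+1) (by omega)
    have h3 : K k = Q k + (S k)ᵀ * P k + (A k)ᵀ * K (k+1) * E k :=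
      QDPAux.fact3 rfl hK1s (hP k hk) (hE k hk) (hK k hk)
    have h4 : (P k)ᵀ * W k = -((B k)ᵀ * K (k+1) * A k + S k)ᵀ :=
      QDPAux.fact4 rfl (hWiW k hk) (hWsym k hk) (hP k hk)
    have hGt : ((B k)ᵀ * K (k+1) * A k + S k)ᵀ = (A k)ᵀ * K (k+1) * B k + (S k)ᵀ := by
      rw [Matrix.transpose_add, Matrix.transpose_mul, Matrix.transpose_mul,
        Matrix.transpose_transpose, hK1s, Matrix.mul_assoc]
    have hz : W k *ᵥ vvec N K E B W C D1 D2 P l k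
        = -((B k)ᵀ *ᵥ (K (k+1) *ᵥ (C k *ᵥ l k)) + (D2 k)ᵀ *ᵥ l k
            + (B k)ᵀ *ᵥ rvec N K E C D1 D2 P l (k+1)) := by
      show W k *ᵥ (-((W k)⁻¹ *ᵥ _)) = _
      rw [Matrix.mulVec_neg, Matrix.mulVec_mulVec, hWWi k hk, Matrix.one_mulVec]
    have h5 : (P k)ᵀ *ᵥ ((B k)ᵀ *ᵥ (K (k+1) *ᵥ (C k *ᵥ l k)) + (D2 k)ᵀ *ᵥ l k
          + (B k)ᵀ *ᵥ rvec N K E C D1 D2 P l (k+1))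
        = (S k)ᵀ *ᵥ vvec N K E B W C D1 D2 P l k
          + ((A k)ᵀ * K (k+1) * B k) *ᵥ vvec N K E B W C D1 D2 P l k := by
      have hzz : ((B k)ᵀ *ᵥ (K (k+1) *ᵥ (C k *ᵥ l k)) + (D2 k)ᵀ *ᵥ l k
            + (B k)ᵀ *ᵥ rvec N K E C D1 D2 P l (k+1))
          = -(W k *ᵥ vvec N K E B W C D1 D2 P l k) := by rw [hz, neg_neg]
      rw [hzz, Matrix.mulVec_neg, Matrix.mulVec_mulVec, h4, Matrix.neg_mulVec, neg_neg,
        hGt, Matrix.add_mulVec]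
      abel
    rw [rvec_rec N K E C D1 D2 P l k hk hK1s, h3, hphS k, hqh]
    rw [hE k hk]
    simp only [Matrix.transpose_add, Matrix.transpose_mul, Matrix.add_mulVec,
      Matrix.mulVec_add, ← Matrix.mulVec_mulVec]
    simp only [Matrix.mulVec_add, Matrix.mulVec_mulVec] at h5 ⊢
    rw [← hph]
    simp only [Matrix.mul_assoc] at h5 ⊢
    linear_combination (norm := abel) h5
  have hrvN : rvec N K E C D1 D2 P l N = 0 := by
    simp [rvec]
  -- Step E: first-order condition at the candidate (KKT/telescoping)
  have hBilph : BilJ N Q R S D1 D2 l ph qh dp dq = 0 := by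
    unfold BilJ
    have hterm : ∀ k ∈ range N,
        (dp k ⬝ᵥ Q k *ᵥ ph k + ph k ⬝ᵥ Q k *ᵥ dp k + 2 * (dq k ⬝ᵥ S k *ᵥ ph k)
          + 2 * (qh k ⬝ᵥ S k *ᵥ dp k) + dq k ⬝ᵥ R k *ᵥ qh k + qh k ⬝ᵥ R k *ᵥ dq k
          + 2 * (l k ⬝ᵥ D1 k *ᵥ dp k) + 2 * (l k ⬝ᵥ D2 k *ᵥ dq k))
        = (fun j => 2 * (dp j ⬝ᵥ (K j *ᵥ ph j + rvec N K E C D1 D2 P l j))) k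
          - (fun j => 2 * (dp j ⬝ᵥ (K j *ᵥ ph j + rvec N K E C D1 D2 P l j))) (k+1) := by
      intro k hk
      have hkN : k < N := Finset.mem_range.1 hk
      simp only []
      have e1 : ph k ⬝ᵥ Q k *ᵥ dp k = dp k ⬝ᵥ Q k *ᵥ ph k :=
        QDPAux.dot_symm (Q k) (hQsymm k (by omega)) (ph k) (dp k)
      have e2 : qh k ⬝ᵥ S k *ᵥ dp k = dp k ⬝ᵥ (S k)ᵀ *ᵥ qh k := by
        rw [QDPAux.dot_trans, dotProduct_comm]
      have e3 : qh k ⬝ᵥ R k *ᵥ dq k = dq k ⬝ᵥ R k *ᵥ qh k :=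
        QDPAux.dot_symm (R k) (hRsymm k hkN) (qh k) (dq k)
      have e4 : l k ⬝ᵥ D1 k *ᵥ dp k = dp k ⬝ᵥ (D1 k)ᵀ *ᵥ l k := by
        rw [QDPAux.dot_trans, dotProduct_comm]
      have e5 : l k ⬝ᵥ D2 k *ᵥ dq k = dq k ⬝ᵥ (D2 k)ᵀ *ᵥ l k := by
        rw [QDPAux.dot_trans, dotProduct_comm]
      rw [e1, e2, e3, e4, e5]
      have hsp := hstatp k hkN
      have hsq := hstatq k hkN
      have hdpk := hdpdyn k hkN
      have key1 : dp k ⬝ᵥ Q k *ᵥ ph k + dp k ⬝ᵥ (S k)ᵀ *ᵥ qh k + dp k ⬝ᵥ (D1 k)ᵀ *ᵥ l k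
          = dp k ⬝ᵥ (K k *ᵥ ph k + rvec N K E C D1 D2 P l k)
            - dp k ⬝ᵥ (A k)ᵀ *ᵥ (K (k+1) *ᵥ ph (k+1) + rvec N K E C D1 D2 P l (k+1)) := by
        rw [hsp]
        simp only [dotProduct_add, dotProduct_sub]
        ring
      have key2 : dq k ⬝ᵥ S k *ᵥ ph k + dq k ⬝ᵥ R k *ᵥ qh k + dq k ⬝ᵥ (D2 k)ᵀ *ᵥ l k
          = - (dq k ⬝ᵥ (B k)ᵀ *ᵥ (K (k+1) *ᵥ ph (k+1) + rvec N K E C D1 D2 P l (k+1))) := by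
        have : dq k ⬝ᵥ (S k *ᵥ ph k + R k *ᵥ qh k + (D2 k)ᵀ *ᵥ l k
            + (B k)ᵀ *ᵥ (K (k+1) *ᵥ ph (k+1) + rvec N K E C D1 D2 P l (k+1))) = 0 := by
          rw [hsq, dotProduct_zero]
        simp only [dotProduct_add] at this
        linarith
      have key3 : dp k ⬝ᵥ (A k)ᵀ *ᵥ (K (k+1) *ᵥ ph (k+1) + rvec N K E C D1 D2 P l (k+1))
            + dq k ⬝ᵥ (B k)ᵀ *ᵥ (K (k+1) *ᵥ ph (k+1) + rvec N K E C D1 D2 P l (k+1))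
          = dp (k+1) ⬝ᵥ (K (k+1) *ᵥ ph (k+1) + rvec N K E C D1 D2 P l (k+1)) := by
        rw [QDPAux.dot_trans, QDPAux.dot_trans, hdpk, add_dotProduct]
      linarith
    rw [Finset.sum_congr rfl hterm, Finset.sum_range_sub']
    have hlamN : K N *ᵥ ph N + rvec N K E C D1 D2 P l N = Q N *ᵥ ph N := by
      rw [hrvN, hKN, add_zero]
    have e6 : ph N ⬝ᵥ Q N *ᵥ dp N = dp N ⬝ᵥ Q N *ᵥ ph N :=
      QDPAux.dot_symm (Q N) (hQsymm N le_rfl) (ph N) (dp N)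
    rw [hlamN, e6, hdp0]
    simp only [zero_dotProduct]
    ring
  -- Step F: the quadratic form vanishes on the difference
  have hQuad0 : QuadJ N Q R S dp dq = 0 := by
    have hphsplit : ph = fun k => p k + dp k := funext fun k => by simp [hdp]
    have hqhsplit : qh = fun k => q k + dq k := funext fun k => by simp [hdq]
    have := BilJ_shift N Q R S D1 D2 l p q dp dq
    rw [← hphsplit, ← hqhsplit] at this
    rw [hBilph, hBilpq] at this
    linarith
  -- Step G: the difference vanishes
  have hdpz : ∀ k, k ≤ N → dp k = 0 := by
    by_contra hcon
    push_neg at hcon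
    obtain ⟨k1, hk1, hne⟩ := hcon
    have hpos := hsosc dp dq hdp0 hdpdyn (fun hc => hne (hc.1 k1 hk1))
    unfold QuadJ at hQuad0
    linarith
  -- Step I: closed form of the candidate
  have hCF : ∀ k, k ≤ N → ph k =
      prodE E 0 k *ᵥ lm1 + (∑ i ∈ range N, Umat B W P E D1 D2 i k *ᵥ l i)
        + (∑ i ∈ range N, (Fmat B W K E i k * C i) *ᵥ l i) := by
    intro k
    induction k with
    | zero =>
        intro _
        have hU0 : ∀ i, Umat B W P E D1 D2 i 0 = 0 := by
          intro i
          unfold Umat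
          simp [Nat.min_zero]
        have hF0 : ∀ i, Fmat B W K E i 0 = 0 := by
          intro i
          unfold Fmat
          simp [Nat.min_zero]
        simp [hU0, hF0, prodE, hph0]
    | succ k ihk =>
        intro hk1
        have hkN : k < N := by omega
        rw [hphS k, ihk (by omega)]
        -- expand the (k+1)-kernels
        have hUrec : ∀ i ∈ range N, Umat B W P E D1 D2 i (k+1) *ᵥ l i
            = E k *ᵥ (Umat B W P E D1 D2 i k *ᵥ l i)
              + (if i = k then (-(B k * (W k)⁻¹ * (D2 k)ᵀ)) *ᵥ l i else 0)
              + (if k < i then (Okm B W k * (Mmat D1 D2 P E i (k+1))ᵀ) *ᵥ l i else 0) := by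
          intro i _
          rw [Umat_rec]
          simp only [Matrix.add_mulVec, ← Matrix.mulVec_mulVec]
          congr 1
          · congr 1
            split <;> simp [Matrix.zero_mulVec]
          · split <;> simp [Matrix.zero_mulVec]
        have hFrec : ∀ i ∈ range N, (Fmat B W K E i (k+1) * C i) *ᵥ l i
            = E k *ᵥ ((Fmat B W K E i k * C i) *ᵥ l i)
              + (if i = k then ((1 - Okm B W i * K (i+1)) * C i) *ᵥ l i else 0)
              + (if k < i then (Okm B W k * ((Vmat K E i (k+1))ᵀ * C i)) *ᵥ l i else 0) := by
          intro i _
          rw [Fmat_rec, Matrix.add_mul, Matrix.add_mul]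
          simp only [Matrix.add_mulVec, ← Matrix.mulVec_mulVec]
          congr 1
          · congr 1
            split <;> simp [Matrix.zero_mulVec, Matrix.mul_assoc]
          · split <;> simp [Matrix.zero_mulVec, Matrix.mul_assoc]
        rw [Finset.sum_congr rfl hUrec, Finset.sum_congr rfl hFrec]
        rw [Finset.sum_add_distrib, Finset.sum_add_distrib,
          Finset.sum_add_distrib, Finset.sum_add_distrib]
        rw [← QDPAux.mulVec_sumv, ← QDPAux.mulVec_sumv]
        rw [Finset.sum_ite_eq' (range N) k
            (fun i => (-(B k * (W k)⁻¹ * (D2 k)ᵀ)) *ᵥ l i),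
          Finset.sum_ite_eq' (range N) k
            (fun i => ((1 - Okm B W i * K (i+1)) * C i) *ᵥ l i),
          if_pos (Finset.mem_range.2 hkN), if_pos (Finset.mem_range.2 hkN)]
        have hico1 : ∑ i ∈ range N,
            (if k < i then (Okm B W k * (Mmat D1 D2 P E i (k+1))ᵀ) *ᵥ l i else 0)
            = ∑ i ∈ Ico (k+1) N, (Okm B W k * (Mmat D1 D2 P E i (k+1))ᵀ) *ᵥ l i := by
          rw [← Finset.sum_filter]
          congr 1
          ext x
          simp only [Finset.mem_filter, Finset.mem_range, Finset.mem_Ico]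
          omega
        have hico2 : ∑ i ∈ range N,
            (if k < i then (Okm B W k * ((Vmat K E i (k+1))ᵀ * C i)) *ᵥ l i else 0)
            = ∑ i ∈ Ico (k+1) N, (Okm B W k * ((Vmat K E i (k+1))ᵀ * C i)) *ᵥ l i := by
          rw [← Finset.sum_filter]
          congr 1
          ext x
          simp only [Finset.mem_filter, Finset.mem_range, Finset.mem_Ico]
          omega
        rw [hico1, hico2]
        have hrv : ∑ i ∈ Ico (k+1) N, (Okm B W k * (Mmat D1 D2 P E i (k+1))ᵀ) *ᵥ l i
            + ∑ i ∈ Ico (k+1) N, (Okm B W k * ((Vmat K E i (k+1))ᵀ * C i)) *ᵥ l i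
            = Okm B W k *ᵥ (-(rvec N K E C D1 D2 P l (k+1))) := by
          rw [show (-(rvec N K E C D1 D2 P l (k+1)))
              = ∑ i ∈ Ico (k+1) N, ((Mmat D1 D2 P E i (k+1))ᵀ *ᵥ l i
                + (Vmat K E i (k+1))ᵀ *ᵥ (C i *ᵥ l i)) from by rw [rvec]; rw [neg_neg],
            QDPAux.mulVec_sumv, ← Finset.sum_add_distrib]
          refine Finset.sum_congr rfl (fun i _ => ?_)
          simp only [Matrix.mulVec_add, ← Matrix.mulVec_mulVec]
        -- now a pure mulVec identity
        have hprod : prodE E 0 (k+1) *ᵥ lm1 = E k *ᵥ (prodE E 0 k *ᵥ lm1) := by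
          rw [QDPAux.prodE_succ, Nat.zero_add, ← Matrix.mulVec_mulVec]
        have hBv : B k *ᵥ vvec N K E B W C D1 D2 P l k + C k *ᵥ l k
            = (-(B k * (W k)⁻¹ * (D2 k)ᵀ)) *ᵥ l k
              + ((1 - Okm B W k * K (k+1)) * C k) *ᵥ l k
              + Okm B W k *ᵥ (-(rvec N K E C D1 D2 P l (k+1))) := by
          show B k *ᵥ (-((W k)⁻¹ *ᵥ _)) + _ = _
          unfold Okm
          simp only [Matrix.mulVec_neg, Matrix.mulVec_add, Matrix.neg_mulVec,
            Matrix.sub_mul, Matrix.one_mul, Matrix.sub_mulVec, ← Matrix.mulVec_mulVec]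
          abel
        rw [hprod]
        rw [Matrix.mulVec_add, Matrix.mulVec_add]
        linear_combination (norm := abel) hBv - hrv
  -- conclusion
  intro k hk
  have h1 : dp k = 0 := hdpz k hk
  have h2 : p k = ph k := by
    have : ph k - p k = 0 := h1
    have h3 := sub_eq_zero.mp this
    exact h3.symm
  rw [h2, hCF k hk]
end
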